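/- arXiv:1805.00235 — 2 statements merged into one kernel-verified Lean document; each statement's English description precedes it below -/
import Mathlib

section
/- Let μ : ℝ³ → ℝ be twice continuously differentiable with μ(z) > 0 for all z, and define the parametrix q^k(x,y) = (μ(x)/μ(y)) q̊^k(x,y), u_j^k(x,y) = (1/μ(y)) ů_j^k(x,y). Then for all x ≠ y in ℝ³ and all j,k ∈ {1,2,3}, applying the variable-viscosity Stokes operator in x to the parametrix yields exactly the remainder: 𝒜_j(q^k(·,y), u^k(·,y))(x) = R_kj(x,y), where R_kj(x,y) = (3/(4πμ(y))) ∑_{i=1}^3 ∂_iμ(x) (x_i−y_i)(x_j−y_j)(x_k−y_k)/‖x−y‖^5 = (1/μ(y)) ∑_{i=1}^3 ∂_iμ(x) σ̊_ij(q̊^k, ů^k)(x,y). -/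
open MeasureTheory Real

noncomputable section

/-- 3-dimensional Euclidean space. -/
abbrev E3 : Type := EuclideanSpace ℝ (Fin 3)

/-- The `i`-th standard basis vector of `ℝ³`. -/
def e3 (i : Fin 3) : E3 := EuclideanSpace.single i (1 : ℝ)

/-- Pressure fundamental solution of the constant-viscosity Stokes system:
`q̊^k(x,y) = -(x_k - y_k)/(4π‖x-y‖³)`. -/
def qF (k : Fin 3) (x y : E3) : ℝ := -(x k - y k) / (4 * π * ‖x - y‖ ^ 3)

/-- Velocity fundamental solution of the constant-viscosity incompressible Stokes system:
`ů_j^k(x,y) = -(1/8π)(δ_j^k/‖x-y‖ + (x_j-y_j)(x_k-y_k)/‖x-y‖³)`. -/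
def uF (j k : Fin 3) (x y : E3) : ℝ :=
  -(1 / (8 * π)) * ((if j = k then (1 : ℝ) else 0) / ‖x - y‖ +
    (x j - y j) * (x k - y k) / ‖x - y‖ ^ 3)

/-- Partial derivative in the `i`-th coordinate direction. -/
def pd (i : Fin 3) (f : E3 → ℝ) (x : E3) : ℝ := fderiv ℝ f x (e3 i)

/-- The Laplacian `Δf = ∑ ∂²f/∂x_i²`. -/
def lap (f : E3 → ℝ) (x : E3) : ℝ := ∑ i : Fin 3, pd i (fun z => pd i f z) x

/-- Divergence of a vector field given componentwise. -/
def divg (v : Fin 3 → E3 → ℝ) (x : E3) : ℝ := ∑ l : Fin 3, pd l (v l) x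

/-- Constant-viscosity (μ=1) stress tensor
`σ̊_ij(p,v)(x) = -δ_i^j p(x) + ∂_j v_i(x) + ∂_i v_j(x) - (2/3) δ_i^j div v(x)`. -/
def sigma0 (p : E3 → ℝ) (v : Fin 3 → E3 → ℝ) (i j : Fin 3) (x : E3) : ℝ :=
  -(if i = j then p x else 0) + pd j (v i) x + pd i (v j) x
    - (2 / 3) * (if i = j then divg v x else 0)

/-- Variable-viscosity stress tensor
`σ_ij(p,v)(x) = -δ_i^j p(x) + μ(x)(∂_j v_i(x) + ∂_i v_j(x) - (2/3) δ_i^j div v(x))`. -/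
def sigmaMu (μ : E3 → ℝ) (p : E3 → ℝ) (v : Fin 3 → E3 → ℝ) (i j : Fin 3) (x : E3) : ℝ :=
  -(if i = j then p x else 0) + μ x * (pd j (v i) x + pd i (v j) x
    - (2 / 3) * (if i = j then divg v x else 0))

/-- Variable-viscosity compressible Stokes operator
`𝒜_j(p,v)(x) = ∑_i ∂_i[μ(x)(∂_i v_j + ∂_j v_i - (2/3) δ_i^j div v)] - ∂_j p(x)`. -/
def stokesA (μ : E3 → ℝ) (p : E3 → ℝ) (v : Fin 3 → E3 → ℝ) (j : Fin 3) (x : E3) : ℝ :=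
  (∑ i : Fin 3, pd i (fun z => μ z * (pd i (v j) z + pd j (v i) z
      - (2 / 3) * (if i = j then divg v z else 0))) x) - pd j p x

/-- The weakly singular remainder
`R_kj(x,y) = (3/(4πμ(y))) ∑_i ∂_iμ(x) (x_i-y_i)(x_j-y_j)(x_k-y_k)/‖x-y‖⁵`. -/
def Rrem (μ : E3 → ℝ) (k j : Fin 3) (x y : E3) : ℝ :=
  (3 / (4 * π * μ y)) * ∑ i : Fin 3, pd i μ x *
    ((x i - y i) * (x j - y j) * (x k - y k) / ‖x - y‖ ^ 5)

namespace Stmt9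

/-! ### Auxiliary machinery -/

def S (y z : E3) : ℝ := ∑ l, (z l - y l)^2

lemma S_eq (y z : E3) : S y z = ‖z - y‖^2 := by
  rw [EuclideanSpace.norm_eq, Real.sq_sqrt (by positivity)]
  simp [S]

lemma S_pos {y z : E3} (h : z ≠ y) : 0 < S y z := by
  rw [S_eq]; exact pow_pos (norm_pos_iff.mpr (sub_ne_zero.2 h)) 2

lemma hasD_coord (a : Fin 3) (y : E3) (x : E3) :
    HasFDerivAt (fun z : E3 => z a - y a) (EuclideanSpace.proj (𝕜 := ℝ) a) x := by
  simpa using ((EuclideanSpace.proj (𝕜 := ℝ) a).hasFDerivAt (x := x)).sub_const (y a)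

lemma proj_e3 (a i : Fin 3) : (EuclideanSpace.proj (𝕜 := ℝ) a) (e3 i) = if i = a then 1 else 0 := by
  simp [e3, EuclideanSpace.single_apply, eq_comm]

/-- derivative of S -/
def LS (y x : E3) : E3 →L[ℝ] ℝ := ∑ l, (2 * (x l - y l)) • (EuclideanSpace.proj (𝕜 := ℝ) l)

lemma hasD_S (y x : E3) : HasFDerivAt (S y) (LS y x) x := by
  have h : ∀ l : Fin 3, HasFDerivAt (fun z : E3 => (z l - y l)^2)
      ((2 * (x l - y l)) • (EuclideanSpace.proj (𝕜 := ℝ) l)) x := by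
    intro l
    have := (hasD_coord l y x).fun_mul (hasD_coord l y x)
    simpa [pow_two, two_mul, add_smul] using this
  exact HasFDerivAt.fun_sum (fun l (_ : l ∈ Finset.univ) => h l)

lemma LS_apply (y x : E3) (i : Fin 3) : LS y x (e3 i) = 2 * (x i - y i) := by
  simp [LS, e3, EuclideanSpace.single_apply, mul_ite, Finset.sum_ite_eq]

def G (y : E3) (e : ℝ) (z : E3) : ℝ := S y z ^ e

lemma hasD_G (y : E3) (e : ℝ) {x : E3} (h : x ≠ y) :
    HasFDerivAt (G y e) ((e * S y x ^ (e - 1)) • LS y x) x := by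
  exact (Real.hasDerivAt_rpow_const (p := e) (Or.inl (S_pos h).ne')).comp_hasFDerivAt x (hasD_S y x)

lemma pd_eq {f : E3 → ℝ} {L : E3 →L[ℝ] ℝ} {x : E3} (h : HasFDerivAt f L x) (i : Fin 3) :
    pd i f x = L (e3 i) := by rw [pd, h.fderiv]

lemma pd_G (y : E3) (e : ℝ) {x : E3} (h : x ≠ y) (i : Fin 3) :
    pd i (G y e) x = 2 * e * (x i - y i) * G y (e - 1) x := by
  rw [pd_eq (hasD_G y e h) i]
  simp only [ContinuousLinearMap.smul_apply, smul_eq_mul, LS_apply, G]; ring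

def F1 (y : E3) (a : Fin 3) (e : ℝ) (z : E3) : ℝ := (z a - y a) * G y e z
def F2 (y : E3) (a b : Fin 3) (e : ℝ) (z : E3) : ℝ := (z a - y a) * ((z b - y b) * G y e z)
def F3 (y : E3) (a b c : Fin 3) (e : ℝ) (z : E3) : ℝ :=
  (z a - y a) * ((z b - y b) * ((z c - y c) * G y e z))

lemma hasD_F1 (y : E3) (a : Fin 3) (e : ℝ) {x : E3} (h : x ≠ y) :
    HasFDerivAt (F1 y a e)
      ((x a - y a) • ((e * S y x ^ (e - 1)) • LS y x) + G y e x • EuclideanSpace.proj (𝕜 := ℝ) a) x :=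
  (hasD_coord a y x).mul (hasD_G y e h)

lemma pd_F1 (y : E3) (a : Fin 3) (e : ℝ) {x : E3} (h : x ≠ y) (i : Fin 3) :
    pd i (F1 y a e) x
      = (if i = a then 1 else 0) * G y e x
        + (x a - y a) * (2 * e * (x i - y i)) * G y (e - 1) x := by
  rw [pd_eq (hasD_F1 y a e h) i]
  simp only [ContinuousLinearMap.add_apply, ContinuousLinearMap.smul_apply, smul_eq_mul, LS_apply, proj_e3, G]; ring

lemma hasD_F2 (y : E3) (a b : Fin 3) (e : ℝ) {x : E3} (h : x ≠ y) :
    HasFDerivAt (F2 y a b e)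
      ((x a - y a) • ((x b - y b) • ((e * S y x ^ (e - 1)) • LS y x)
          + G y e x • EuclideanSpace.proj (𝕜 := ℝ) b)
        + ((x b - y b) * G y e x) • EuclideanSpace.proj (𝕜 := ℝ) a) x :=
  (hasD_coord a y x).mul ((hasD_coord b y x).mul (hasD_G y e h))

lemma pd_F2 (y : E3) (a b : Fin 3) (e : ℝ) {x : E3} (h : x ≠ y) (i : Fin 3) :
    pd i (F2 y a b e) x
      = ((if i = a then 1 else 0) * (x b - y b) + (if i = b then 1 else 0) * (x a - y a)) * G y e x
        + (x a - y a) * (x b - y b) * (2 * e * (x i - y i)) * G y (e - 1) x := by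
  rw [pd_eq (hasD_F2 y a b e h) i]
  simp only [ContinuousLinearMap.add_apply, ContinuousLinearMap.smul_apply, smul_eq_mul, LS_apply, proj_e3, G]; ring

lemma hasD_F3 (y : E3) (a b c : Fin 3) (e : ℝ) {x : E3} (h : x ≠ y) :
    HasFDerivAt (F3 y a b c e)
      ((x a - y a) • ((x b - y b) • ((x c - y c) • ((e * S y x ^ (e - 1)) • LS y x)
            + G y e x • EuclideanSpace.proj (𝕜 := ℝ) c)
          + ((x c - y c) * G y e x) • EuclideanSpace.proj (𝕜 := ℝ) b)
        + ((x b - y b) * ((x c - y c) * G y e x)) • EuclideanSpace.proj (𝕜 := ℝ) a) x :=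
  (hasD_coord a y x).mul ((hasD_coord b y x).mul ((hasD_coord c y x).mul (hasD_G y e h)))

lemma pd_F3 (y : E3) (a b c : Fin 3) (e : ℝ) {x : E3} (h : x ≠ y) (i : Fin 3) :
    pd i (F3 y a b c e) x
      = ((if i = a then 1 else 0) * (x b - y b) * (x c - y c)
          + (if i = b then 1 else 0) * (x a - y a) * (x c - y c)
          + (if i = c then 1 else 0) * (x a - y a) * (x b - y b)) * G y e x
        + (x a - y a) * (x b - y b) * (x c - y c) * (2 * e * (x i - y i)) * G y (e - 1) x := by
  rw [pd_eq (hasD_F3 y a b c e h) i]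
  simp only [ContinuousLinearMap.add_apply, ContinuousLinearMap.smul_apply, smul_eq_mul, LS_apply, proj_e3, G]; ring

lemma pd_add {f g : E3 → ℝ} {x : E3} (hf : DifferentiableAt ℝ f x) (hg : DifferentiableAt ℝ g x)
    (i : Fin 3) : pd i (fun w => f w + g w) x = pd i f x + pd i g x := by
  simp [pd, fderiv_fun_add hf hg]

lemma pd_cmul {f : E3 → ℝ} {x : E3} (hf : DifferentiableAt ℝ f x) (c : ℝ) (i : Fin 3) :
    pd i (fun w => c * f w) x = c * pd i f x := by
  simp [pd, fderiv_const_mul hf]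

lemma pd_mul {f g : E3 → ℝ} {x : E3} (hf : DifferentiableAt ℝ f x) (hg : DifferentiableAt ℝ g x)
    (i : Fin 3) : pd i (fun w => f w * g w) x = f x * pd i g x + g x * pd i f x := by
  simp [pd, fderiv_fun_mul hf hg]

lemma sq_rpow (n : ℝ) (hn : 0 < n) (m : ℕ) : ((n^2 : ℝ)) ^ (-((m : ℝ)/2)) = (n^m)⁻¹ := by
  have h2 : ((n^2 : ℝ)) ^ (-((m : ℝ)/2)) = n ^ (((2:ℕ):ℝ) * (-((m : ℝ)/2))) := by
    rw [Real.rpow_mul hn.le, Real.rpow_natCast]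
  rw [h2, show (((2:ℕ):ℝ) * (-((m : ℝ)/2))) = -(m:ℝ) by push_cast; ring,
    Real.rpow_neg hn.le, Real.rpow_natCast]

lemma norm_pos' {y x : E3} (h : x ≠ y) : 0 < ‖x - y‖ := norm_pos_iff.mpr (sub_ne_zero.2 h)

lemma G_val (y : E3) {x : E3} (h : x ≠ y) (m : ℕ) :
    G y (-((m : ℝ)/2)) x = (‖x - y‖^m)⁻¹ := by
  rw [G, S_eq, sq_rpow ‖x - y‖ (norm_pos' h) m]

lemma G1_val (y : E3) {x : E3} (h : x ≠ y) : G y (-(1/2) : ℝ) x = (‖x - y‖^1)⁻¹ := by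
  rw [show (-(1/2) : ℝ) = -(((1:ℕ):ℝ)/2) by norm_num]; exact G_val y h 1

lemma G3_val (y : E3) {x : E3} (h : x ≠ y) : G y (-(3/2) : ℝ) x = (‖x - y‖^3)⁻¹ := by
  rw [show (-(3/2) : ℝ) = -(((3:ℕ):ℝ)/2) by norm_num]; exact G_val y h 3

lemma G5_val (y : E3) {x : E3} (h : x ≠ y) : G y (-(5/2) : ℝ) x = (‖x - y‖^5)⁻¹ := by
  rw [show (-(5/2) : ℝ) = -(((5:ℕ):ℝ)/2) by norm_num]; exact G_val y h 5

lemma G7_val (y : E3) {x : E3} (h : x ≠ y) : G y (-(7/2) : ℝ) x = (‖x - y‖^7)⁻¹ := by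
  rw [show (-(7/2) : ℝ) = -(((7:ℕ):ℝ)/2) by norm_num]; exact G_val y h 7

/-! ### The parametrix building blocks -/

def Uf (y : E3) (k j : Fin 3) (z : E3) : ℝ :=
  -(1/(8*π)) * ((if j = k then (1:ℝ) else 0) * G y (-(1/2)) z + F2 y j k (-(3/2)) z)

def Qf (y : E3) (k : Fin 3) (z : E3) : ℝ := -(1/(4*π)) * F1 y k (-(3/2)) z

lemma uF_eq {y z : E3} (h : z ≠ y) (j k : Fin 3) : uF j k z y = Uf y k j z := by
  rw [uF, Uf, F2, G1_val y h, G3_val y h]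
  rw [div_eq_mul_inv, div_eq_mul_inv, pow_one]
  ring

lemma qF_eq {y z : E3} (h : z ≠ y) (k : Fin 3) : qF k z y = Qf y k z := by
  rw [qF, Qf, F1, G, S_eq, show (-(3/2) : ℝ) = -(((3:ℕ):ℝ)/2) by norm_num,
    sq_rpow ‖z - y‖ (norm_pos' h) 3]
  field_simp

def DUf (y : E3) (k i j : Fin 3) (z : E3) : ℝ :=
  -(1/(8*π)) * ( -((if j = k then (1:ℝ) else 0) * F1 y i (-(3/2)) z)
    + (if i = j then (1:ℝ) else 0) * F1 y k (-(3/2)) z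
    + (if i = k then (1:ℝ) else 0) * F1 y j (-(3/2)) z
    - 3 * F3 y i j k (-(5/2)) z )

lemma diff_Uf (y : E3) (k j : Fin 3) {z : E3} (h : z ≠ y) :
    DifferentiableAt ℝ (Uf y k j) z := by
  apply DifferentiableAt.const_mul
  exact ((hasD_G y _ h).differentiableAt.const_mul _).add (hasD_F2 y j k _ h).differentiableAt

lemma pd_Uf (y : E3) (k : Fin 3) {z : E3} (h : z ≠ y) (i j : Fin 3) :
    pd i (Uf y k j) z = DUf y k i j z := by
  have hG : DifferentiableAt ℝ (G y (-(1/2))) z := (hasD_G y _ h).differentiableAt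
  have hF2 : DifferentiableAt ℝ (F2 y j k (-(3/2))) z := (hasD_F2 y j k _ h).differentiableAt
  rw [show Uf y k j = fun w => -(1/(8*π)) * ((if j = k then (1:ℝ) else 0) * G y (-(1/2)) w
      + F2 y j k (-(3/2)) w) from rfl]
  rw [pd_cmul ((hG.const_mul _).fun_add hF2), pd_add (hG.const_mul _) hF2,
    pd_cmul hG, pd_G y _ h, pd_F2 y j k _ h]
  rw [DUf, F1, F1, F1, F3,
    show (-(1/2) : ℝ) - 1 = -(3/2) by norm_num,
    show (-(3/2) : ℝ) - 1 = -(5/2) by norm_num]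
  ring

lemma diff_DUf (y : E3) (k i j : Fin 3) {z : E3} (h : z ≠ y) :
    DifferentiableAt ℝ (DUf y k i j) z := by
  apply DifferentiableAt.const_mul
  exact (((((hasD_F1 y i _ h).differentiableAt.const_mul _).neg).add
    ((hasD_F1 y k _ h).differentiableAt.const_mul _)).add
    ((hasD_F1 y j _ h).differentiableAt.const_mul _)).sub
    ((hasD_F3 y i j k _ h).differentiableAt.const_mul _)

def D2f (y : E3) (k l i j : Fin 3) (x : E3) : ℝ :=
  -(1/(8*π)) * (
    -((if j = k then (1:ℝ) else 0) * ((if l = i then (1:ℝ) else 0) * G y (-(3/2)) x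
        + (x i - y i) * (-3 * (x l - y l)) * G y (-(5/2)) x))
    + (if i = j then (1:ℝ) else 0) * ((if l = k then (1:ℝ) else 0) * G y (-(3/2)) x
        + (x k - y k) * (-3 * (x l - y l)) * G y (-(5/2)) x)
    + (if i = k then (1:ℝ) else 0) * ((if l = j then (1:ℝ) else 0) * G y (-(3/2)) x
        + (x j - y j) * (-3 * (x l - y l)) * G y (-(5/2)) x)
    - 3 * ( ((if l = i then (1:ℝ) else 0) * (x j - y j) * (x k - y k)
           + (if l = j then (1:ℝ) else 0) * (x i - y i) * (x k - y k)
           + (if l = k then (1:ℝ) else 0) * (x i - y i) * (x j - y j)) * G y (-(5/2)) x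
         + (x i - y i) * (x j - y j) * (x k - y k) * (-5 * (x l - y l)) * G y (-(7/2)) x) )

lemma pd_sub {f g : E3 → ℝ} {x : E3} (hf : DifferentiableAt ℝ f x) (hg : DifferentiableAt ℝ g x)
    (i : Fin 3) : pd i (fun w => f w - g w) x = pd i f x - pd i g x := by
  simp [pd, fderiv_fun_sub hf hg]

lemma pd_neg {f : E3 → ℝ} {x : E3} (i : Fin 3) :
    pd i (fun w => -(f w)) x = -pd i f x := by
  simp [pd, fderiv_neg]

lemma pd_DUf (y : E3) (k : Fin 3) {x : E3} (h : x ≠ y) (l i j : Fin 3) :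
    pd l (DUf y k i j) x = D2f y k l i j x := by
  have h1 : DifferentiableAt ℝ (F1 y i (-(3/2))) x := (hasD_F1 y i _ h).differentiableAt
  have h2 : DifferentiableAt ℝ (F1 y k (-(3/2))) x := (hasD_F1 y k _ h).differentiableAt
  have h3 : DifferentiableAt ℝ (F1 y j (-(3/2))) x := (hasD_F1 y j _ h).differentiableAt
  have h4 : DifferentiableAt ℝ (F3 y i j k (-(5/2))) x := (hasD_F3 y i j k _ h).differentiableAt
  rw [show DUf y k i j = fun w => -(1/(8*π)) *
      ( -((if j = k then (1:ℝ) else 0) * F1 y i (-(3/2)) w)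
        + (if i = j then (1:ℝ) else 0) * F1 y k (-(3/2)) w
        + (if i = k then (1:ℝ) else 0) * F1 y j (-(3/2)) w
        - 3 * F3 y i j k (-(5/2)) w) from rfl]
  rw [pd_cmul ((((h1.const_mul _).fun_neg.fun_add (h2.const_mul _)).fun_add (h3.const_mul _)).fun_sub
    (h4.const_mul _))]
  rw [pd_sub (((h1.const_mul _).fun_neg.fun_add (h2.const_mul _)).fun_add (h3.const_mul _)) (h4.const_mul _)]
  rw [pd_add ((h1.const_mul _).fun_neg.fun_add (h2.const_mul _)) (h3.const_mul _)]
  rw [pd_add (h1.const_mul _).fun_neg (h2.const_mul _)]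
  rw [show (fun w => -((if j = k then (1:ℝ) else 0) * F1 y i (-(3/2)) w))
      = fun w => -(((if j = k then (1:ℝ) else 0) * F1 y i (-(3/2)) w)) from rfl]
  rw [pd_neg, pd_cmul h1, pd_cmul h2, pd_cmul h3, pd_cmul h4,
    pd_F1 y i _ h, pd_F1 y k _ h, pd_F1 y j _ h, pd_F3 y i j k _ h]
  rw [D2f,
    show (-(3/2) : ℝ) - 1 = -(5/2) by norm_num,
    show (-(5/2) : ℝ) - 1 = -(7/2) by norm_num]
  ring


lemma sumDUf (y : E3) (k : Fin 3) {z : E3} (h : z ≠ y) :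
    ∑ l : Fin 3, DUf y k l l z = 0 := by
  have hS : S y z = (z 0 - y 0)^2 + (z 1 - y 1)^2 + (z 2 - y 2)^2 := by
    simp [S, Fin.sum_univ_three]
  have hrel : S y z ^ (-(5/2):ℝ) * ((z 0 - y 0)^2 + (z 1 - y 1)^2 + (z 2 - y 2)^2)
      = S y z ^ (-(3/2):ℝ) := by
    rw [← hS]
    nth_rewrite 2 [← Real.rpow_one (S y z)]
    rw [← Real.rpow_add (S_pos h)]; norm_num
  simp only [Fin.sum_univ_three, DUf, F1, F3, G, eq_self_iff_true, if_true]
  linear_combination (3/(8*π) * (z k - y k)) * hrel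

lemma mem_ne {y w : E3} (hw : w ∈ ({y}ᶜ : Set E3)) : w ≠ y := hw

lemma nhds_ne {y x : E3} (h : x ≠ y) : ({y}ᶜ : Set E3) ∈ nhds x :=
  isOpen_compl_singleton.mem_nhds (by simpa using h)

lemma ev_uF (y : E3) {x : E3} (h : x ≠ y) (j k : Fin 3) :
    (fun w : E3 => uF j k w y) =ᶠ[nhds x] Uf y k j := by
  filter_upwards [nhds_ne h] with w hw
  exact uF_eq (mem_ne hw) j k

lemma pd_uF (y : E3) (k : Fin 3) {z : E3} (h : z ≠ y) (i j : Fin 3) :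
    pd i (fun w => uF j k w y) z = DUf y k i j z := by
  rw [pd, (ev_uF y h j k).fderiv_eq, ← pd, pd_Uf y k h]

lemma pd_uFc (y : E3) (k : Fin 3) {z : E3} (h : z ≠ y) (c : ℝ) (i j : Fin 3) :
    pd i (fun w => c * uF j k w y) z = c * DUf y k i j z := by
  have hev : (fun w : E3 => c * uF j k w y) =ᶠ[nhds z] fun w => c * Uf y k j w := by
    filter_upwards [nhds_ne h] with w hw
    rw [uF_eq (mem_ne hw)]
  rw [pd, hev.fderiv_eq, ← pd, pd_cmul (diff_Uf y k j h), pd_Uf y k h]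

lemma divg_u (y : E3) (k : Fin 3) {z : E3} (h : z ≠ y) :
    divg (fun l w => uF l k w y) z = 0 := by
  rw [divg]
  calc ∑ l : Fin 3, pd l (fun w => uF l k w y) z
      = ∑ l : Fin 3, DUf y k l l z :=
        Finset.sum_congr rfl (fun l _ => pd_uF y k h l l)
    _ = 0 := sumDUf y k h

lemma divg_v (y : E3) (k : Fin 3) {z : E3} (h : z ≠ y) (c : ℝ) :
    divg (fun l w => c * uF l k w y) z = 0 := by
  rw [divg]
  calc ∑ l : Fin 3, pd l (fun w => c * uF l k w y) z
      = ∑ l : Fin 3, c * DUf y k l l z :=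
        Finset.sum_congr rfl (fun l _ => pd_uFc y k h c l l)
    _ = c * ∑ l : Fin 3, DUf y k l l z := by rw [Finset.mul_sum]
    _ = 0 := by rw [sumDUf y k h, mul_zero]

def DQf (y : E3) (k j : Fin 3) (x : E3) : ℝ :=
  -(1/(4*π)) * ((if j = k then (1:ℝ) else 0) * G y (-(3/2)) x
    + (x k - y k) * (-3 * (x j - y j)) * G y (-(5/2)) x)

lemma pd_Qf (y : E3) (k : Fin 3) {x : E3} (h : x ≠ y) (j : Fin 3) :
    pd j (Qf y k) x = DQf y k j x := by
  rw [show Qf y k = fun w => -(1/(4*π)) * F1 y k (-(3/2)) w from rfl,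
    pd_cmul (hasD_F1 y k _ h).differentiableAt, pd_F1 y k _ h, DQf,
    show (-(3/2) : ℝ) - 1 = -(5/2) by norm_num]
  ring

lemma pd_term (μ : E3 → ℝ) (hμ : ContDiff ℝ 2 μ) (y : E3) (k : Fin 3) {x : E3} (h : x ≠ y)
    (my : ℝ) (i j : Fin 3) :
    pd i (fun z => μ z * (pd i (fun w => 1 / my * uF j k w y) z
        + pd j (fun w => 1 / my * uF i k w y) z
        - 2 / 3 * (if i = j then divg (fun l w => 1 / my * uF l k w y) z else 0))) x
      = pd i μ x * (1 / my * (DUf y k i j x + DUf y k j i x))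
        + μ x * (1 / my * (D2f y k i i j x + D2f y k i j i x)) := by
  have hμd : DifferentiableAt ℝ μ x := (hμ.differentiable (by norm_num)).differentiableAt
  have hdd : DifferentiableAt ℝ (fun z => DUf y k i j z + DUf y k j i z) x :=
    (diff_DUf y k i j h).add (diff_DUf y k j i h)
  have hev : (fun z => μ z * (pd i (fun w => 1 / my * uF j k w y) z
        + pd j (fun w => 1 / my * uF i k w y) z
        - 2 / 3 * (if i = j then divg (fun l w => 1 / my * uF l k w y) z else 0)))
      =ᶠ[nhds x] (fun z => μ z * (1 / my * (DUf y k i j z + DUf y k j i z))) := by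
    filter_upwards [nhds_ne h] with w hw
    rw [pd_uFc y k (mem_ne hw) (1/my) i j, pd_uFc y k (mem_ne hw) (1/my) j i,
      divg_v y k (mem_ne hw) (1/my), ite_self]
    ring
  rw [pd, hev.fderiv_eq, ← pd,
    pd_mul hμd (hdd.const_mul _),
    pd_cmul hdd, pd_add (diff_DUf y k i j h) (diff_DUf y k j i h),
    pd_DUf y k h, pd_DUf y k h]
  ring

lemma pd_p (μ : E3 → ℝ) (hμ : ContDiff ℝ 2 μ) (y : E3) (k : Fin 3) {x : E3} (h : x ≠ y)
    (my : ℝ) (j : Fin 3) :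
    pd j (fun z => μ z / my * qF k z y) x
      = pd j μ x * (1 / my * Qf y k x) + μ x * (1 / my * DQf y k j x) := by
  have hμd : DifferentiableAt ℝ μ x := (hμ.differentiable (by norm_num)).differentiableAt
  have hQd : DifferentiableAt ℝ (Qf y k) x :=
    ((hasD_F1 y k (-(3/2)) h).differentiableAt.const_mul _ : DifferentiableAt ℝ
      (fun w => -(1/(4*π)) * F1 y k (-(3/2)) w) x)
  have hev : (fun z => μ z / my * qF k z y)
      =ᶠ[nhds x] (fun z => μ z * (1 / my * Qf y k z)) := by
    filter_upwards [nhds_ne h] with w hw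
    rw [qF_eq (mem_ne hw)]
    ring
  rw [pd, hev.fderiv_eq, ← pd,
    pd_mul hμd (hQd.const_mul _),
    pd_cmul hQd, pd_Qf y k h]
  ring

end Stmt9


namespace Stmt9

lemma S_expand (y x : E3) :
    S y x = (x 0 - y 0)^2 + (x 1 - y 1)^2 + (x 2 - y 2)^2 := by
  simp [S, Fin.sum_univ_three]

lemma G53 (y : E3) {x : E3} (h : x ≠ y) :
    G y (-(3/2)) x = G y (-(5/2)) x * ((x 0 - y 0)^2 + (x 1 - y 1)^2 + (x 2 - y 2)^2) := by
  rw [G, G, ← S_expand]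
  nth_rewrite 3 [← Real.rpow_one (S y x)]
  rw [← Real.rpow_add (S_pos h)]; norm_num

lemma G75 (y : E3) {x : E3} (h : x ≠ y) :
    G y (-(5/2)) x = G y (-(7/2)) x * ((x 0 - y 0)^2 + (x 1 - y 1)^2 + (x 2 - y 2)^2) := by
  rw [G, G, ← S_expand]
  nth_rewrite 3 [← Real.rpow_one (S y x)]
  rw [← Real.rpow_add (S_pos h)]; norm_num

set_option maxHeartbeats 1000000 in
lemma lemA (y : E3) (k : Fin 3) {x : E3} (h : x ≠ y) (j : Fin 3) :
    D2f y k 0 0 j x + D2f y k 0 j 0 x + (D2f y k 1 1 j x + D2f y k 1 j 1 x)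
      + (D2f y k 2 2 j x + D2f y k 2 j 2 x) = DQf y k j x := by
  have h53 := G53 y h
  have h75 := G75 y h
  have hj : j = 0 ∨ j = 1 ∨ j = 2 := by omega
  have hk : k = 0 ∨ k = 1 ∨ k = 2 := by omega
  rcases hj with rfl | rfl | rfl <;> rcases hk with rfl | rfl | rfl <;>
    (simp only [D2f, DQf, Fin.isValue, Fin.reduceEq, reduceIte];
     rw [h53, h75]; ring)

set_option maxHeartbeats 1000000 in
lemma lemB (μ : E3 → ℝ) (y : E3) (k : Fin 3) {x : E3} (h : x ≠ y) (j : Fin 3) :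
    (1 / μ y) * (pd 0 μ x * (DUf y k 0 j x + DUf y k j 0 x)
      + pd 1 μ x * (DUf y k 1 j x + DUf y k j 1 x)
      + pd 2 μ x * (DUf y k 2 j x + DUf y k j 2 x))
    - (1 / μ y) * (pd j μ x * Qf y k x) = Rrem μ k j x y := by
  have h53 := G53 y h
  have hR : ∀ u : ℝ, u / ‖x - y‖^5 = u * G y (-(5/2)) x := by
    intro u; rw [G5_val y h, div_eq_mul_inv]
  unfold Rrem
  rw [Fin.sum_univ_three]
  simp only [hR]
  have hj : j = 0 ∨ j = 1 ∨ j = 2 := by omega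
  have hk : k = 0 ∨ k = 1 ∨ k = 2 := by omega
  rcases hj with rfl | rfl | rfl <;> rcases hk with rfl | rfl | rfl <;>
    (simp only [DUf, Qf, F1, F3, Fin.isValue, Fin.reduceEq, reduceIte];
     rw [h53]; ring)

end Stmt9

/-- For μ ∈ C² positive, applying the variable-viscosity Stokes operator in x to
the parametrix q^k(x,y) = (μ(x)/μ(y)) q̊^k(x,y), u_j^k(x,y) = (1/μ(y)) ů_j^k(x,y) yields
exactly the remainder: 𝒜_j(q^k(·,y), u^k(·,y))(x) = R_kj(x,y), where
R_kj(x,y) = (3/(4πμ(y))) ∑_i ∂_iμ(x)(x_i-y_i)(x_j-y_j)(x_k-y_k)/‖x-y‖⁵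
          = (1/μ(y)) ∑_i ∂_iμ(x) σ̊_ij(q̊^k, ů^k)(x,y). -/
theorem stmt9 (μ : E3 → ℝ) (hμ : ContDiff ℝ 2 μ) (hpos : ∀ z : E3, 0 < μ z)
    (x y : E3) (hxy : x ≠ y) (j k : Fin 3) :
    stokesA μ (fun z => (μ z / μ y) * qF k z y) (fun l z => (1 / μ y) * uF l k z y) j x
      = Rrem μ k j x y ∧
    Rrem μ k j x y
      = (1 / μ y) * ∑ i : Fin 3,
          pd i μ x * sigma0 (fun z => qF k z y) (fun l z => uF l k z y) i j x := by
  constructor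
  · unfold stokesA
    rw [Fin.sum_univ_three]
    rw [Stmt9.pd_term μ hμ y k hxy (μ y) 0 j, Stmt9.pd_term μ hμ y k hxy (μ y) 1 j,
      Stmt9.pd_term μ hμ y k hxy (μ y) 2 j, Stmt9.pd_p μ hμ y k hxy (μ y) j]
    linear_combination (μ x * (1 / μ y)) * Stmt9.lemA y k hxy j + Stmt9.lemB μ y k hxy j
  · rw [Fin.sum_univ_three]
    unfold sigma0
    rw [Stmt9.pd_uF y k hxy j 0, Stmt9.pd_uF y k hxy 0 j,
      Stmt9.pd_uF y k hxy j 1, Stmt9.pd_uF y k hxy 1 j,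
      Stmt9.pd_uF y k hxy j 2, Stmt9.pd_uF y k hxy 2 j,
      Stmt9.divg_u y k hxy]
    simp only [Stmt9.qF_eq hxy, ite_self]
    have hj : j = 0 ∨ j = 1 ∨ j = 2 := by omega
    rcases hj with rfl | rfl | rfl
    · simp only [Fin.isValue, Fin.reduceEq, reduceIte]
      linear_combination -(Stmt9.lemB μ y k hxy 0)
    · simp only [Fin.isValue, Fin.reduceEq, reduceIte]
      linear_combination -(Stmt9.lemB μ y k hxy 1)
    · simp only [Fin.isValue, Fin.reduceEq, reduceIte]
      linear_combination -(Stmt9.lemB μ y k hxy 2)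
end
end

section
/- For every f ∈ C_c^∞(ℝ³,ℝ), the pair consisting of the pressure p = (4/3) f and the velocity v = −Q̊f, where (Q̊f)_j(y) = ∫_{ℝ³} q̊^j(y,x) f(x) dx, satisfies the homogeneous constant-viscosity compressible Stokes system on all of ℝ³: for each j ∈ {1,2,3} and all y ∈ ℝ³, Å_j((4/3)f, −Q̊f)(y) = Δ(−Q̊f)_j(y) + (1/3) ∂_j div(−Q̊f)(y) − (4/3) ∂_j f(y) = 0. -/
open MeasureTheory Real

noncomputable section

namespace S13

/-- squared norm -/
def nsq (t : E3) : ℝ := ∑ i, t i ^ 2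

lemma nsq_eq_inner (t : E3) : nsq t = (inner ℝ t t : ℝ) := by
  rw [nsq, PiLp.inner_apply]; simp only [RCLike.inner_apply, conj_trivial, sq]

lemma nsq_eq_norm_sq (t : E3) : nsq t = ‖t‖ ^ 2 := by
  rw [nsq_eq_inner, real_inner_self_eq_norm_sq]

lemma nsq_nonneg (t : E3) : 0 ≤ nsq t := by
  rw [nsq_eq_norm_sq]; positivity

lemma nsq_pos {t : E3} (ht : t ≠ 0) : 0 < nsq t := by
  rw [nsq_eq_norm_sq]; exact pow_pos (norm_pos_iff.mpr ht) 2

lemma inner_e3 (t : E3) (i : Fin 3) : (inner ℝ t (e3 i) : ℝ) = t i := by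
  simp [e3, EuclideanSpace.inner_single_right]

lemma hasFDerivAt_nsq (t : E3) :
    HasFDerivAt nsq ((2 : ℝ) • (innerSL ℝ t : E3 →L[ℝ] ℝ)) t := by
  have h := (hasFDerivAt_id (𝕜 := ℝ) t).inner ℝ (hasFDerivAt_id (𝕜 := ℝ) t)
  have he : (fun s : E3 => (inner ℝ (id s) (id s) : ℝ)) = nsq := by
    ext s; rw [nsq_eq_inner]; rfl
  rw [he] at h
  refine h.congr_fderiv ?_
  ext v
  simp [fderivInnerCLM_apply, real_inner_comm, two_smul]

/-- regularized power kernel -/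
def Pp (a ε : ℝ) (t : E3) : ℝ := (nsq t + ε ^ 2) ^ a

lemma Pp_pos {ε : ℝ} (hε : ε ≠ 0) (a : ℝ) (t : E3) : 0 < Pp a ε t :=
  Real.rpow_pos_of_pos (by have := nsq_nonneg t; positivity) a

lemma base_pos {ε : ℝ} (hε : ε ≠ 0) (t : E3) : 0 < nsq t + ε ^ 2 := by
  have := nsq_nonneg t; positivity

lemma hasFDerivAt_Pp {ε : ℝ} (hε : ε ≠ 0) (a : ℝ) (t : E3) :
    HasFDerivAt (Pp a ε) ((2 * a * Pp (a - 1) ε t) • (innerSL ℝ t : E3 →L[ℝ] ℝ)) t := by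
  have h1 : HasFDerivAt (fun s => nsq s + ε ^ 2)
      ((2 : ℝ) • (innerSL ℝ t : E3 →L[ℝ] ℝ)) t := (hasFDerivAt_nsq t).add_const _
  have h2 := Real.hasDerivAt_rpow_const (x := nsq t + ε ^ 2) (p := a)
    (Or.inl (base_pos hε t).ne')
  have h := h2.comp_hasFDerivAt t h1
  refine h.congr_fderiv ?_
  ext v
  simp only [ContinuousLinearMap.smul_apply, smul_eq_mul, Pp,
    innerSL_apply_apply]
  ring

lemma contDiffAt_Pp {ε : ℝ} (hε : ε ≠ 0) (a : ℝ) (t : E3) : ContinuousAt (Pp a ε) t :=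
  (hasFDerivAt_Pp hε a t).differentiableAt.continuousAt

lemma continuous_Pp {ε : ℝ} (hε : ε ≠ 0) (a : ℝ) : Continuous (Pp a ε) :=
  continuous_iff_continuousAt.2 fun t => contDiffAt_Pp hε a t

/-- regularized Stokes pressure kernel; `ε = 0` gives the true kernel. -/
def Kk (i : Fin 3) (ε : ℝ) (t : E3) : ℝ := -(4 * π)⁻¹ * t i * Pp (-(3/2)) ε t

/-- approximate identity -/
def rr (ε : ℝ) (t : E3) : ℝ := 3 * (4 * π)⁻¹ * ε ^ 2 * Pp (-(5/2)) ε t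

/-- regularized Newtonian potential -/
def Ph (ε : ℝ) (t : E3) : ℝ := (4 * π)⁻¹ * Pp (-(1/2)) ε t

lemma hasFDerivAt_Ph {ε : ℝ} (hε : ε ≠ 0) (t : E3) :
    HasFDerivAt (Ph ε) ((-(4 * π)⁻¹ * Pp (-(3/2)) ε t) • (innerSL ℝ t : E3 →L[ℝ] ℝ)) t := by
  have h := (hasFDerivAt_Pp hε (-(1/2)) t).const_smul ((4 * π)⁻¹ : ℝ)
  have he : (fun s => (4 * π)⁻¹ • Pp (-(1/2)) ε s) = Ph ε := by
    ext s; simp [Ph, smul_eq_mul]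
  rw [show ((4 * π)⁻¹ • Pp (-(1/2)) ε) = Ph ε from he] at h
  refine h.congr_fderiv ?_
  rw [smul_smul]
  norm_num

lemma pd_Ph {ε : ℝ} (hε : ε ≠ 0) (t : E3) (i : Fin 3) :
    fderiv ℝ (Ph ε) t (e3 i) = Kk i ε t := by
  rw [(hasFDerivAt_Ph hε t).fderiv]
  rw [ContinuousLinearMap.smul_apply, smul_eq_mul, innerSL_apply_apply, inner_e3]
  simp [Kk]
  ring

end S13

namespace S13

lemma continuous_coord (i : Fin 3) : Continuous (fun t : E3 => t i) :=
  (EuclideanSpace.proj (𝕜 := ℝ) i).continuous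

lemma continuous_nsq : Continuous nsq :=
  continuous_finset_sum _ fun i _ => (continuous_coord i).pow 2

lemma measurable_Pp (a ε : ℝ) : Measurable (Pp a ε) :=
  ((continuous_nsq.measurable).add_const _).pow_const a |>.mono le_rfl le_rfl

lemma measurable_Kk (i : Fin 3) (ε : ℝ) : Measurable (Kk i ε) :=
  (measurable_const.mul (continuous_coord i).measurable).mul (measurable_Pp _ _)

lemma proj_e3 (i m : Fin 3) : e3 m i = if i = m then (1 : ℝ) else 0 := by
  simp [e3, EuclideanSpace.single_apply]

lemma hasFDerivAt_Kk {ε : ℝ} (hε : ε ≠ 0) (i : Fin 3) (t : E3) :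
    HasFDerivAt (Kk i ε)
      ((Pp (-(3/2)) ε t) • ((-(4 * π)⁻¹ : ℝ) • (EuclideanSpace.proj i : E3 →L[ℝ] ℝ))
        + (-(4 * π)⁻¹ * t i) • ((2 * (-(3/2)) * Pp (-(3/2) - 1) ε t) •
            (innerSL ℝ t : E3 →L[ℝ] ℝ))) t := by
  have hu : HasFDerivAt (fun s : E3 => -(4 * π)⁻¹ * s i)
      ((-(4 * π)⁻¹ : ℝ) • (EuclideanSpace.proj i : E3 →L[ℝ] ℝ)) t :=
    ((EuclideanSpace.proj (𝕜 := ℝ) i).hasFDerivAt (x := t)).const_mul _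
  have hv := hasFDerivAt_Pp hε (-(3/2)) t
  have h := hu.mul hv
  rw [add_comm]
  exact h

lemma proj_apply' (i : Fin 3) (x : E3) :
    (EuclideanSpace.proj (𝕜 := ℝ) i : E3 →L[ℝ] ℝ) x = x i := rfl

lemma pd_Kk {ε : ℝ} (hε : ε ≠ 0) (i m : Fin 3) (t : E3) :
    fderiv ℝ (Kk i ε) t (e3 m) =
      -(4 * π)⁻¹ * ((if i = m then (1:ℝ) else 0) * Pp (-(3/2)) ε t
        - 3 * t i * t m * Pp (-(5/2)) ε t) := by
  rw [(hasFDerivAt_Kk hε i t).fderiv]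
  have h52 : Pp (-(3/2) - 1) ε t = Pp (-(5/2)) ε t := by norm_num
  simp only [ContinuousLinearMap.add_apply, ContinuousLinearMap.smul_apply, smul_eq_mul,
    innerSL_apply_apply, inner_e3, h52, proj_apply', proj_e3]
  ring

lemma differentiable_Kk {ε : ℝ} (hε : ε ≠ 0) (i : Fin 3) : Differentiable ℝ (Kk i ε) :=
  fun t => (hasFDerivAt_Kk hε i t).differentiableAt

lemma continuous_pd_Kk {ε : ℝ} (hε : ε ≠ 0) (i m : Fin 3) :
    Continuous (fun t => fderiv ℝ (Kk i ε) t (e3 m)) := by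
  have : (fun t => fderiv ℝ (Kk i ε) t (e3 m)) = fun t =>
      -(4 * π)⁻¹ * ((if i = m then (1:ℝ) else 0) * Pp (-(3/2)) ε t
        - 3 * t i * t m * Pp (-(5/2)) ε t) := funext fun t => pd_Kk hε i m t
  rw [this]
  exact continuous_const.mul ((continuous_const.mul (continuous_Pp hε _)).sub
    ((((continuous_const.mul (continuous_coord i)).mul (continuous_coord m))).mul
      (continuous_Pp hε _)))

lemma div_Kk {ε : ℝ} (hε : ε ≠ 0) (t : E3) :
    ∑ m : Fin 3, fderiv ℝ (Kk m ε) t (e3 m) = -rr ε t := by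
  have h32 : Pp (-(3/2)) ε t = (nsq t + ε ^ 2) * Pp (-(5/2)) ε t := by
    rw [Pp, Pp, show (-(3/2) : ℝ) = 1 + -(5/2) by norm_num,
      Real.rpow_add (base_pos hε t), Real.rpow_one]
  have : ∀ m : Fin 3, fderiv ℝ (Kk m ε) t (e3 m) =
      -(4 * π)⁻¹ * (Pp (-(3/2)) ε t - 3 * t m * t m * Pp (-(5/2)) ε t) := by
    intro m; rw [pd_Kk hε m m t]; simp
  rw [Finset.sum_congr rfl fun m _ => this m, Fin.sum_univ_three]
  have hnsq : nsq t = t 0 ^ 2 + t 1 ^ 2 + t 2 ^ 2 := by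
    simp [nsq, Fin.sum_univ_three]
  rw [rr, h32, hnsq]
  ring

lemma Pp_zero_pos {t : E3} (ht : t ≠ 0) (a : ℝ) : 0 < Pp a 0 t := by
  have := nsq_pos ht
  exact Real.rpow_pos_of_pos (by simpa using this) a

lemma abs_Kk_le (i : Fin 3) (ε : ℝ) (t : E3) :
    |Kk i ε t| ≤ (4 * π)⁻¹ * Pp (-1) 0 t := by
  rcases eq_or_ne t 0 with rfl | ht
  · have h1 : Kk i ε 0 = 0 := by simp [Kk]
    have h2 : (0:ℝ) ≤ Pp (-1) 0 0 :=
      Real.rpow_nonneg (by simp [nsq_nonneg]) _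
    rw [h1, abs_zero]
    positivity
  · have hb : (0:ℝ) < nsq t := nsq_pos ht
    have habs : |Kk i ε t| = (4 * π)⁻¹ * |t i| * Pp (-(3/2)) ε t := by
      rw [Kk, abs_mul, abs_mul]
      have h1 : |(-(4 * π)⁻¹ : ℝ)| = (4 * π)⁻¹ := by
        rw [abs_neg, abs_of_nonneg]; positivity
      have h2 : |Pp (-(3/2)) ε t| = Pp (-(3/2)) ε t := by
        rcases eq_or_ne ε 0 with rfl | hε
        · exact abs_of_nonneg (Pp_zero_pos ht _).le
        · exact abs_of_nonneg (Pp_pos hε _ t).le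
      rw [h1, h2]
    rw [habs]
    have h3 : |t i| ≤ Pp (1/2) 0 t := by
      rw [Pp]
      have h0 : (t i)^2 ≤ nsq t := Finset.single_le_sum (f := fun k => (t k)^2)
          (fun k _ => sq_nonneg _) (Finset.mem_univ i)
      have : (t i)^2 ≤ nsq t + 0 ^ 2 := by simpa using h0
      calc |t i| = ((t i)^2) ^ (1/2 : ℝ) := by
            rw [← Real.sqrt_eq_rpow, Real.sqrt_sq_eq_abs]
        _ ≤ (nsq t + 0 ^ 2) ^ (1/2 : ℝ) :=
            Real.rpow_le_rpow (sq_nonneg _) this (by norm_num)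
    have h4 : Pp (-(3/2)) ε t ≤ Pp (-(3/2)) 0 t := by
      rw [Pp, Pp]
      exact Real.rpow_le_rpow_of_nonpos (by simpa using hb)
        (by nlinarith [sq_nonneg ε]) (by norm_num)
    have h5 : Pp (1/2) 0 t * Pp (-(3/2)) 0 t = Pp (-1) 0 t := by
      rw [Pp, Pp, Pp, ← Real.rpow_add (by simpa using hb)]
      norm_num
    calc (4 * π)⁻¹ * |t i| * Pp (-(3/2)) ε t
        ≤ (4 * π)⁻¹ * Pp (1/2) 0 t * Pp (-(3/2)) 0 t := by
          apply mul_le_mul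
          · exact mul_le_mul_of_nonneg_left h3 (by positivity)
          · exact h4
          · rcases eq_or_ne ε 0 with rfl | hε
            · exact (Pp_zero_pos ht _).le
            · exact (Pp_pos hε _ t).le
          · have := Pp_zero_pos ht (1/2); positivity
      _ = (4 * π)⁻¹ * Pp (-1) 0 t := by rw [mul_assoc, h5]

end S13

namespace S13

def en (n : ℕ) : ℝ := ((n : ℝ) + 1)⁻¹

lemma en_pos (n : ℕ) : 0 < en n := by
  have : (0:ℝ) < (n:ℝ) + 1 := by positivity
  exact inv_pos.2 this

lemma en_ne (n : ℕ) : en n ≠ 0 := (en_pos n).ne'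

lemma en_anti : ∀ {n m : ℕ}, n ≤ m → en m ≤ en n := by
  intro n m h
  apply inv_anti₀ (by positivity)
  exact_mod_cast add_le_add_left (Nat.cast_le.2 h) 1

lemma en_tendsto : Filter.Tendsto en Filter.atTop (nhds 0) := by
  have := tendsto_one_div_add_atTop_nhds_zero_nat (𝕜 := ℝ)
  apply this.congr
  intro n; simp [en, one_div]

lemma Pp_nonneg (a ε : ℝ) (t : E3) : 0 ≤ Pp a ε t :=
  Real.rpow_nonneg (by have := nsq_nonneg t; positivity) a

/-- Key local integrability of the weight `(nsq t)⁻¹ = ‖t‖⁻²` in `ℝ³`. -/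
lemma integrableOn_Pm1 {R : ℝ} (hR : 0 ≤ R) :
    IntegrableOn (Pp (-1) 0) (Metric.closedBall (0:E3) R) volume := by
  set V : ℝ := (volume (Metric.ball (0:E3) 1)).toReal with hV
  have hVnn : 0 ≤ V := ENNReal.toReal_nonneg
  set g : ℕ → E3 → ℝ := fun n t => (nsq t + en n ^ 2)⁻¹ with hg
  have hgcont : ∀ n, Continuous (g n) := by
    intro n
    have h := continuous_Pp (en_ne n) (-1)
    apply h.congr
    intro t; rw [Pp, Real.rpow_neg_one]
  have hgnn : ∀ n t, 0 ≤ g n t := by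
    intro n t
    have := base_pos (en_ne n) t
    positivity
  have key : ∀ n, ∫⁻ t in Metric.closedBall (0:E3) R, ENNReal.ofReal (g n t) ∂volume
      ≤ ENNReal.ofReal (3 * V * R) := by
    intro n
    have hInt : IntegrableOn (g n) (Metric.closedBall (0:E3) R) volume :=
      ((hgcont n).continuousOn).integrableOn_compact (isCompact_closedBall _ _)
    rw [← ofReal_integral_eq_lintegral_ofReal hInt
      (Filter.Eventually.of_forall fun t => hgnn n t)]
    apply ENNReal.ofReal_le_ofReal
    set F : ℝ → ℝ := fun r => if r ≤ R then (r ^ 2 + en n ^ 2)⁻¹ else 0 with hF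
    have hrepr : ∫ t in Metric.closedBall (0:E3) R, g n t ∂volume = ∫ t : E3, F ‖t‖ := by
      rw [← integral_indicator (measurableSet_closedBall)]
      congr 1
      ext t
      by_cases h : t ∈ Metric.closedBall (0:E3) R
      · have h' : ‖t‖ ≤ R := by simpa [Metric.mem_closedBall, dist_zero_right] using h
        rw [Set.indicator_of_mem h, hF]
        simp only [h', if_true, hg, nsq_eq_norm_sq]
      · have h' : ¬ ‖t‖ ≤ R := by simpa [Metric.mem_closedBall, dist_zero_right] using h
        rw [Set.indicator_of_notMem h, hF]
        simp [h']
    rw [hrepr, integral_fun_norm_addHaar volume F, finrank_euclideanSpace_fin]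
    have hFm : Measurable F := by
      apply Measurable.ite (measurableSet_le measurable_id measurable_const)
      · exact ((measurable_id.pow_const 2).add_const _).inv
      · exact measurable_const
    have hFnn : ∀ y, 0 ≤ F y := by
      intro y; rw [hF]
      dsimp only
      split_ifs with h
      · have := en_pos n; positivity
      · exact le_rfl
    have hInd : IntegrableOn (fun y => Set.indicator (Set.Ioc (0:ℝ) R) (fun _ => (1:ℝ)) y)
        (Set.Ioi (0:ℝ)) volume := by
      apply Integrable.integrableOn
      rw [integrable_indicator_iff measurableSet_Ioc]
      exact integrableOn_const (by rw [Real.volume_Ioc]; exact ENNReal.ofReal_ne_top)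
    have hle : ∀ y ∈ Set.Ioi (0:ℝ), y ^ (3-1) • F y ≤
        Set.indicator (Set.Ioc (0:ℝ) R) (fun _ => (1:ℝ)) y := by
      intro y hy
      have hy0 : (0:ℝ) < y := hy
      by_cases h : y ≤ R
      · rw [Set.indicator_of_mem (Set.mem_Ioc.mpr ⟨hy0, h⟩)]
        simp only [hF, h, if_true, smul_eq_mul]
        rw [show (3-1 : ℕ) = 2 by norm_num, ← div_eq_mul_inv,
          div_le_one (by have := en_pos n; positivity)]
        nlinarith [sq_nonneg (en n)]
      · rw [Set.indicator_of_notMem (by simp [Set.mem_Ioc, h])]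
        simp [hF, h]
    have hIF : IntegrableOn (fun y => y ^ (3-1) • F y) (Set.Ioi (0:ℝ)) volume := by
      apply Integrable.mono' hInd.integrable
      · exact ((measurable_id.pow_const _).smul hFm).aestronglyMeasurable.restrict
      · filter_upwards [ae_restrict_mem measurableSet_Ioi] with y hy
        rw [Real.norm_eq_abs, abs_of_nonneg]
        · exact hle y hy
        · have hy0 : (0:ℝ) < y := hy
          have := hFnn y
          positivity
    have h1D : ∫ y in Set.Ioi (0:ℝ), y ^ (3 - 1) • F y ≤ R := by
      calc ∫ y in Set.Ioi (0:ℝ), y ^ (3-1) • F y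
          ≤ ∫ y in Set.Ioi (0:ℝ), Set.indicator (Set.Ioc (0:ℝ) R) (fun _ => (1:ℝ)) y :=
            setIntegral_mono_on hIF hInd measurableSet_Ioi hle
        _ = (volume (Set.Ioc (0:ℝ) R)).toReal := by
            rw [integral_indicator measurableSet_Ioc,
              Measure.restrict_restrict measurableSet_Ioc,
              Set.inter_eq_left.2 Set.Ioc_subset_Ioi_self]
            simp [hR]
        _ ≤ R := by
            rw [Real.volume_Ioc, ENNReal.toReal_ofReal (by linarith)]
            linarith
    rw [nsmul_eq_mul, smul_eq_mul]
    have hInn : 0 ≤ ∫ y in Set.Ioi (0:ℝ), y ^ (3 - 1) • F y := by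
      apply setIntegral_nonneg measurableSet_Ioi
      intro y hy
      have hy0 : (0:ℝ) < y := hy
      have := hFnn y
      positivity
    push_cast
    rw [measureReal_def, ← hV]
    nlinarith [mul_le_mul_of_nonneg_left h1D hVnn]
  -- monotone convergence
  have hmonot : ∀ t : E3, Monotone (fun n => ENNReal.ofReal (g n t)) := by
    intro t n m hnm
    apply ENNReal.ofReal_le_ofReal
    show (nsq t + en n ^ 2)⁻¹ ≤ (nsq t + en m ^ 2)⁻¹
    apply inv_anti₀ (base_pos (en_ne m) t)
    have h1 := en_anti hnm
    nlinarith [en_pos m, en_pos n]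
  have hptwise : ∀ t : E3, ENNReal.ofReal (Pp (-1) 0 t) ≤ ⨆ n, ENNReal.ofReal (g n t) := by
    intro t
    rcases eq_or_ne t 0 with rfl | ht
    · have h0 : Pp (-1) 0 (0:E3) = 0 := by
        rw [Pp]
        have hn : nsq (0:E3) = 0 := by simp [nsq]
        rw [hn]
        norm_num
      simp [h0]
    · have hb : 0 < nsq t := nsq_pos ht
      have h0 : Pp (-1) 0 t = (nsq t)⁻¹ := by
        rw [Pp, Real.rpow_neg_one]; norm_num
      have hc : Filter.Tendsto (fun n => g n t) Filter.atTop (nhds ((nsq t)⁻¹)) := by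
        have h2 : Filter.Tendsto (fun n => en n ^ 2) Filter.atTop (nhds 0) := by
          simpa using en_tendsto.pow 2
        have h1' : Filter.Tendsto (fun n => nsq t + en n ^ 2) Filter.atTop (nhds (nsq t)) := by
          simpa using tendsto_const_nhds.add h2
        exact h1'.inv₀ hb.ne'
      have hlim : Filter.Tendsto (fun n => ENNReal.ofReal (g n t)) Filter.atTop
          (nhds (ENNReal.ofReal (Pp (-1) 0 t))) := by
        rw [h0]
        exact (ENNReal.continuous_ofReal.tendsto _).comp hc
      have hsup := tendsto_atTop_iSup (hmonot t)
      exact (tendsto_nhds_unique hlim hsup).le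
  constructor
  · exact (measurable_Pp _ _).aestronglyMeasurable.restrict
  · rw [hasFiniteIntegral_iff_ofReal (Filter.Eventually.of_forall fun t => Pp_nonneg _ _ t)]
    calc ∫⁻ t in Metric.closedBall (0:E3) R, ENNReal.ofReal (Pp (-1) 0 t) ∂volume
        ≤ ∫⁻ t in Metric.closedBall (0:E3) R, ⨆ n, ENNReal.ofReal (g n t) ∂volume :=
          lintegral_mono fun t => hptwise t
      _ = ⨆ n, ∫⁻ t in Metric.closedBall (0:E3) R, ENNReal.ofReal (g n t) ∂volume :=
          lintegral_iSup (fun n => ((hgcont n).measurable).ennreal_ofReal)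
            (fun n m h t => hmonot t h)
      _ ≤ ENNReal.ofReal (3 * V * R) := iSup_le key
      _ < ⊤ := ENNReal.ofReal_lt_top

lemma locallyIntegrable_K (i : Fin 3) : LocallyIntegrable (Kk i 0) volume := by
  rw [locallyIntegrable_iff]
  intro k hk
  obtain ⟨r, hr⟩ := hk.isBounded.subset_closedBall 0
  have hsub : k ⊆ Metric.closedBall (0:E3) (max r 0) :=
    hr.trans (Metric.closedBall_subset_closedBall (le_max_left _ _))
  apply IntegrableOn.mono_set _ hsub
  apply Integrable.mono' (((integrableOn_Pm1 (le_max_right r 0)).const_mul ((4*π)⁻¹)))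
  · exact (measurable_Kk i 0).aestronglyMeasurable.restrict
  · filter_upwards with t
    rw [Real.norm_eq_abs]
    exact abs_Kk_le i 0 t

/-- product of a locally integrable function and a compactly supported continuous function -/
lemma integrable_mul_cpt {u ψ : E3 → ℝ} (hu : LocallyIntegrable u volume)
    (hψc : Continuous ψ) (hψs : HasCompactSupport ψ) :
    Integrable (fun t => u t * ψ t) volume := by
  have hb : ∃ C, ∀ x, ‖ψ x‖ ≤ C := hψs.exists_bound_of_continuous hψc
  have heq : (fun t => u t * ψ t) = (tsupport ψ).indicator (fun t => u t * ψ t) := by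
    ext t
    by_cases h : t ∈ tsupport ψ
    · rw [Set.indicator_of_mem h]
    · rw [Set.indicator_of_notMem h, image_eq_zero_of_notMem_tsupport h, mul_zero]
  rw [heq]
  rw [integrable_indicator_iff (hψs.isCompact.measurableSet)]
  have h2 := Integrable.bdd_mul (hu.integrableOn_isCompact hψs.isCompact)
    (hψc.aestronglyMeasurable.restrict) (Filter.Eventually.of_forall hb.choose_spec)
  exact h2.congr (Filter.Eventually.of_forall fun x => mul_comm _ _)

end S13

namespace S13

lemma int_const_mul {α : Type*} [MeasurableSpace α] (μ : Measure α) (c : ℝ) (f : α → ℝ) :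
    ∫ a, c * f a ∂μ = c * ∫ a, f a ∂μ := by
  simpa [smul_eq_mul] using integral_smul c f

lemma int_mul_const {α : Type*} [MeasurableSpace α] (μ : Measure α) (c : ℝ) (f : α → ℝ) :
    ∫ a, f a * c ∂μ = (∫ a, f a ∂μ) * c := by
  simp only [mul_comm _ c]
  exact int_const_mul μ c f

lemma locallyIntegrable_Pm1 : LocallyIntegrable (Pp (-1) 0) volume := by
  rw [locallyIntegrable_iff]
  intro k hk
  obtain ⟨r, hr⟩ := hk.isBounded.subset_closedBall 0
  exact IntegrableOn.mono_set (integrableOn_Pm1 (le_max_right r 0))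
    (hr.trans (Metric.closedBall_subset_closedBall (le_max_left _ _)))

lemma ae_ne_zero : ∀ᵐ t : E3 ∂volume, t ≠ (0:E3) := by
  have h : volume ({(0:E3)} : Set E3) = 0 := measure_singleton _
  rw [ae_iff]
  convert h using 2
  ext t
  simp

/-- Dominated convergence for the regularized kernels against a compactly supported
continuous function. -/
lemma tendsto_Kk_integral (i : Fin 3) {ψ : E3 → ℝ} (hψc : Continuous ψ)
    (hψs : HasCompactSupport ψ) :
    Filter.Tendsto (fun n => ∫ t : E3, Kk i (en n) t * ψ t) Filter.atTop
      (nhds (∫ t : E3, Kk i 0 t * ψ t)) := by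
  apply tendsto_integral_of_dominated_convergence
    (bound := fun t => (4 * π)⁻¹ * Pp (-1) 0 t * |ψ t|)
  · intro n
    exact ((measurable_Kk i (en n)).mul hψc.measurable).aestronglyMeasurable
  · have hu : LocallyIntegrable (fun t => (4 * π)⁻¹ * Pp (-1) 0 t) volume := by
      rw [locallyIntegrable_iff]
      intro k hk
      exact (locallyIntegrable_Pm1.integrableOn_isCompact hk).const_mul _
    have : Integrable (fun t => ((4 * π)⁻¹ * Pp (-1) 0 t) * |ψ t|) volume :=
      integrable_mul_cpt hu hψc.abs hψs.abs
    simpa [mul_assoc] using this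
  · intro n
    filter_upwards with t
    rw [Real.norm_eq_abs, abs_mul]
    exact mul_le_mul_of_nonneg_right (abs_Kk_le i (en n) t) (abs_nonneg _)
  · filter_upwards [ae_ne_zero] with t ht
    have hb : 0 < nsq t := nsq_pos ht
    have h2 : Filter.Tendsto (fun n => nsq t + en n ^ 2) Filter.atTop (nhds (nsq t)) := by
      have := (en_tendsto.pow 2)
      simpa using tendsto_const_nhds.add this
    have h3 : Filter.Tendsto (fun n => Pp (-(3/2)) (en n) t) Filter.atTop
        (nhds (Pp (-(3/2)) 0 t)) := by
      have hc : ContinuousAt (fun x : ℝ => x ^ (-(3/2) : ℝ)) (nsq t) :=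
        Real.continuousAt_rpow_const _ _ (Or.inl hb.ne')
      have := hc.tendsto.comp h2
      simpa [Pp, Function.comp_def] using this
    have h4 : Filter.Tendsto (fun n => Kk i (en n) t) Filter.atTop (nhds (Kk i 0 t)) := by
      have heq : (fun n => Kk i (en n) t)
          = fun n => (-(4 * π)⁻¹ * t i) * Pp (-(3/2)) (en n) t := by
        funext n; rw [Kk]; try ring
      have heq2 : Kk i 0 t = (-(4 * π)⁻¹ * t i) * Pp (-(3/2)) 0 t := by
        rw [Kk]; try ring
      rw [heq, heq2]
      exact h3.const_mul _
    exact h4.mul_const (ψ t)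

lemma nsq_smul (c : ℝ) (s : E3) : nsq (c • s) = c ^ 2 * nsq s := by
  simp only [nsq, PiLp.smul_apply, smul_eq_mul, Finset.mul_sum]
  exact Finset.sum_congr rfl fun i _ => by ring

lemma continuous_rr1 : Continuous (rr 1) := by
  apply Continuous.mul continuous_const (continuous_Pp one_ne_zero _)

lemma integrable_rr1 : Integrable (rr 1) volume := by
  have h : Integrable (fun x : E3 => ((1:ℝ) + ‖x‖ ^ 2) ^ (-(5:ℝ) / 2)) volume :=
    integrable_rpow_neg_one_add_norm_sq (by rw [finrank_euclideanSpace_fin]; norm_num)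
  have h2 := h.const_mul (3 * (4 * π)⁻¹)
  apply h2.congr
  filter_upwards with t
  rw [rr, Pp, nsq_eq_norm_sq]
  norm_num [add_comm]

/-- scaling identity for the approximate identity -/
lemma rr_scale {ε : ℝ} (hε : 0 < ε) (h : E3 → ℝ) :
    ∫ t : E3, rr ε t * h t = ∫ s : E3, rr 1 s * h (ε • s) := by
  have key := MeasureTheory.Measure.integral_comp_smul (volume : Measure E3)
    (fun t => rr ε t * h t) ε
  rw [finrank_euclideanSpace_fin] at key
  have hscale : ∀ s : E3, rr ε (ε • s) = ε ^ (-3 : ℝ) * rr 1 s := by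
    intro s
    rw [rr, rr, Pp, Pp, nsq_smul]
    have h1 : ε ^ 2 * nsq s + ε ^ 2 = ε ^ 2 * (nsq s + 1 ^ 2) := by ring
    rw [h1, Real.mul_rpow (sq_nonneg ε) (by have := nsq_nonneg s; positivity)]
    have h2 : (ε ^ 2 : ℝ) ^ (-(5/2) : ℝ) = ε ^ (-5 : ℝ) := by
      rw [← Real.rpow_natCast ε 2, ← Real.rpow_mul hε.le]
      norm_num
    rw [h2, one_pow]
    have h3 : ε ^ (-3:ℝ) = ε ^ (2:ℕ) * ε ^ (-5:ℝ) := by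
      rw [← Real.rpow_natCast ε 2, ← Real.rpow_add hε]
      norm_num
    rw [h3]
    ring
  have hL : ∫ s : E3, rr ε (ε • s) * h (ε • s)
      = ε ^ (-3 : ℝ) * ∫ s : E3, rr 1 s * h (ε • s) := by
    rw [← int_const_mul]
    congr 1
    ext s
    rw [hscale s]
    ring
  rw [hL] at key
  have hpow : |((ε ^ 3 : ℝ))⁻¹| = ε ^ (-3 : ℝ) := by
    rw [abs_of_nonneg (by positivity)]
    rw [← Real.rpow_natCast ε 3, ← Real.rpow_neg hε.le]
    norm_num
  rw [hpow, smul_eq_mul] at key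
  have hne : ε ^ (-3:ℝ) ≠ 0 := by
    apply ne_of_gt
    exact Real.rpow_pos_of_pos hε _
  exact (mul_left_cancel₀ hne key).symm

/-- Γ(5/2) and the volume of the unit ball in ℝ³ -/
lemma volume_unit_ball_E3 : (volume (Metric.ball (0:E3) 1)).toReal = 4 / 3 * π := by
  rw [EuclideanSpace.volume_ball (Fin 3) 0 1]
  have hcard : Fintype.card (Fin 3) = 3 := by simp
  rw [hcard]
  have hΓ : Real.Gamma ((3:ℝ) / 2 + 1) = 3 / 4 * √π := by
    rw [Real.Gamma_add_one (by norm_num)]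
    rw [show (3:ℝ)/2 = 1/2 + 1 by norm_num, Real.Gamma_add_one (by norm_num),
      Real.Gamma_one_half_eq]
    ring
  have hsq : √π * √π = π := Real.mul_self_sqrt Real.pi_nonneg
  have hsp : (0:ℝ) < √π := Real.sqrt_pos.2 Real.pi_pos
  have hval : √π ^ 3 / Real.Gamma (↑(3:ℕ) / 2 + 1) = 4 / 3 * π := by
    push_cast
    rw [hΓ]
    field_simp
    nlinarith [hsq, hsp]
  rw [hval]
  simp [ENNReal.toReal_ofReal (by positivity : (0:ℝ) ≤ 4 / 3 * π)]

/-- the 1-D radial integral -/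
lemma oneD_integral :
    ∫ r in Set.Ioi (0:ℝ), r ^ 2 * ((r ^ 2 + 1) ^ (-(5/2) : ℝ)) = 1 / 3 := by
  set F : ℝ → ℝ := fun r => 1/3 * r ^ 3 * ((r ^ 2 + 1) ^ (-(3/2) : ℝ)) with hF
  have hbase : ∀ r : ℝ, (0:ℝ) < r ^ 2 + 1 := fun r => by positivity
  have hDF : ∀ r : ℝ, HasDerivAt F (r ^ 2 * ((r ^ 2 + 1) ^ (-(5/2) : ℝ))) r := by
    intro r
    have h1 : HasDerivAt (fun x : ℝ => x ^ 3) (3 * r ^ 2) r := by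
      simpa using hasDerivAt_pow 3 r
    have h2 : HasDerivAt (fun x : ℝ => x ^ 2 + 1) (2 * r) r := by
      simpa using (hasDerivAt_pow 2 r).add_const 1
    have h3 : HasDerivAt (fun y : ℝ => y ^ (-(3/2) : ℝ))
        ((-(3/2)) * (r ^ 2 + 1) ^ ((-(3/2)) - 1 : ℝ)) (r ^ 2 + 1) :=
      Real.hasDerivAt_rpow_const (Or.inl (hbase r).ne')
    have h4 := HasDerivAt.comp r h3 h2
    have h5 := ((h1.mul h4).const_mul (1/3 : ℝ))
    simp only [Function.comp_def, Pi.mul_apply] at h4 h5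
    have heq : (fun x : ℝ => 1/3 * (x ^ 3 * ((x ^ 2 + 1) ^ (-(3/2) : ℝ)))) = F := by
      ext x; rw [hF]; ring
    rw [heq] at h5
    refine h5.congr_deriv ?_
    have hsplit : (r ^ 2 + 1 : ℝ) ^ (-(3/2) : ℝ)
        = (r ^ 2 + 1) * ((r ^ 2 + 1) ^ (-(5/2) : ℝ)) := by
      rw [show (-(3/2) : ℝ) = 1 + -(5/2) by norm_num, Real.rpow_add (hbase r),
        Real.rpow_one]
    have h52 : ((r ^ 2 + 1 : ℝ)) ^ ((-(3/2)) - 1 : ℝ) = (r ^ 2 + 1) ^ (-(5/2) : ℝ) := by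
      norm_num
    rw [h52, hsplit]
    ring
  have hcont : ContinuousWithinAt F (Set.Ici 0) 0 :=
    (hDF 0).differentiableAt.continuousAt.continuousWithinAt
  have hInt : IntegrableOn (fun r => r ^ 2 * ((r ^ 2 + 1) ^ (-(5/2) : ℝ)))
      (Set.Ioi (0:ℝ)) volume := by
    apply Integrable.mono' (integrable_inv_one_add_sq.integrableOn)
    · apply Continuous.aestronglyMeasurable ?_ |>.restrict
      exact (continuous_pow 2).mul (((continuous_pow 2).add
        continuous_const).rpow_const fun r => Or.inl (hbase r).ne')
    · filter_upwards with r
      rw [Real.norm_eq_abs, abs_of_nonneg (by positivity)]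
      have e1 : r ^ 2 * ((r ^ 2 + 1) ^ (-(5/2) : ℝ))
          ≤ (r ^ 2 + 1) * ((r ^ 2 + 1) ^ (-(5/2) : ℝ)) := by
        apply mul_le_mul_of_nonneg_right (by linarith) (Real.rpow_nonneg (hbase r).le _)
      have e2 : (r ^ 2 + 1) * ((r ^ 2 + 1) ^ (-(5/2) : ℝ)) = (r ^ 2 + 1) ^ (-(3/2) : ℝ) := by
        rw [show (-(3/2) : ℝ) = 1 + -(5/2) by norm_num, Real.rpow_add (hbase r),
          Real.rpow_one]
      have e3 : (r ^ 2 + 1 : ℝ) ^ (-(3/2) : ℝ) ≤ (r ^ 2 + 1) ^ (-1 : ℝ) :=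
        Real.rpow_le_rpow_of_exponent_le (by nlinarith [sq_nonneg r]) (by norm_num)
      rw [Real.rpow_neg_one] at e3
      calc r ^ 2 * ((r ^ 2 + 1) ^ (-(5/2) : ℝ)) ≤ (r ^ 2 + 1) ^ (-(3/2) : ℝ) := by
            rw [← e2]; exact e1
        _ ≤ (r ^ 2 + 1)⁻¹ := e3
        _ = (1 + r ^ 2)⁻¹ := by rw [add_comm]
  have hTop : Filter.Tendsto F Filter.atTop (nhds (1/3)) := by
    have hE : ∀ᶠ r in Filter.atTop, 1/3 * ((1 + (r⁻¹) ^ 2) ^ (-(3/2) : ℝ)) = F r := by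
      filter_upwards [Filter.eventually_gt_atTop (0:ℝ)] with r hr
      have hA : ((r:ℝ) ^ 2) ^ ((3:ℝ)/2) = r ^ (3:ℕ) := by
        rw [← Real.rpow_natCast r 2, ← Real.rpow_mul hr.le, ← Real.rpow_natCast r 3]
        norm_num
      have hB : (1 + r⁻¹ ^ 2 : ℝ) ^ (-(3/2) : ℝ)
          = ((r ^ 2 + 1) ^ (-(3/2) : ℝ)) * r ^ (3:ℕ) := by
        have h1 : (1 + r⁻¹ ^ 2 : ℝ) = (r ^ 2 + 1) * (r ^ 2)⁻¹ := by
          field_simp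
        rw [h1, Real.mul_rpow (hbase r).le (by positivity),
          Real.inv_rpow (sq_nonneg r), ← Real.rpow_neg (sq_nonneg r)]
        norm_num [hA]
      rw [hF, hB]
      ring
    apply Filter.Tendsto.congr' hE
    have hlim : Filter.Tendsto (fun r : ℝ => 1 + (r⁻¹) ^ 2) Filter.atTop (nhds (1 + 0 ^ 2)) :=
      tendsto_const_nhds.add (tendsto_inv_atTop_zero.pow 2)
    norm_num at hlim
    have hc : ContinuousAt (fun y : ℝ => y ^ (-(3/2) : ℝ)) 1 :=
      Real.continuousAt_rpow_const _ _ (Or.inl one_ne_zero)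
    have hcomp := (hc.tendsto.comp hlim).const_mul (1/3 : ℝ)
    norm_num at hcomp
    convert hcomp using 2
    norm_num
  have := integral_Ioi_of_hasDerivAt_of_tendsto hcont (fun x _ => hDF x) hInt hTop
  rw [this, hF]
  norm_num

/-- total mass of the approximate identity -/
lemma integral_rr1 : ∫ s : E3, rr 1 s = 1 := by
  have hpol := integral_fun_norm_addHaar (volume : Measure E3)
    (fun r : ℝ => 3 * (4*π)⁻¹ * ((r ^ 2 + 1) ^ (-(5/2) : ℝ)))
  have hrepr : ∫ s : E3, rr 1 s
      = ∫ x : E3, (fun r : ℝ => 3 * (4*π)⁻¹ * ((r ^ 2 + 1) ^ (-(5/2) : ℝ))) ‖x‖ := by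
    congr 1
    ext s
    rw [rr, Pp, nsq_eq_norm_sq]
    norm_num
  rw [hrepr, hpol, finrank_euclideanSpace_fin, measureReal_def, volume_unit_ball_E3]
  have h1 : ∫ y in Set.Ioi (0:ℝ), y ^ (3-1) • (3 * (4*π)⁻¹ * ((y ^ 2 + 1) ^ (-(5/2) : ℝ)))
      = 3 * (4*π)⁻¹ * (1/3) := by
    rw [← oneD_integral, ← int_const_mul]
    congr 1
    ext y
    rw [smul_eq_mul]
    norm_num
    ring
  rw [h1, nsmul_eq_mul, smul_eq_mul]
  have hπ : π ≠ 0 := Real.pi_ne_zero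
  field_simp
  ring

/-- approximate identity convergence -/
lemma tendsto_rr_integral {h : E3 → ℝ} (hhc : Continuous h) (hhs : HasCompactSupport h) :
    Filter.Tendsto (fun n => ∫ t : E3, rr (en n) t * h t) Filter.atTop (nhds (h 0)) := by
  have hscale : ∀ n, ∫ t : E3, rr (en n) t * h t = ∫ s : E3, rr 1 s * h (en n • s) :=
    fun n => rr_scale (en_pos n) h
  rw [show (fun n => ∫ t : E3, rr (en n) t * h t)
    = fun n => ∫ s : E3, rr 1 s * h (en n • s) from funext hscale]
  obtain ⟨C, hC⟩ := hhs.exists_bound_of_continuous hhc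
  have hrrnn : ∀ s, 0 ≤ rr 1 s := by
    intro s
    rw [rr]
    have := Pp_nonneg (-(5/2)) 1 s
    positivity
  have key : Filter.Tendsto (fun n => ∫ s : E3, rr 1 s * h (en n • s)) Filter.atTop
      (nhds (∫ s : E3, rr 1 s * h 0)) := by
    apply tendsto_integral_of_dominated_convergence (bound := fun s => rr 1 s * C)
    · intro n
      exact (continuous_rr1.mul (hhc.comp ((continuous_const (y := en n)).smul continuous_id))
        ).aestronglyMeasurable
    · exact integrable_rr1.mul_const C
    · intro n
      filter_upwards with s
      rw [Real.norm_eq_abs, abs_mul, abs_of_nonneg (hrrnn s)]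
      have hCs := hC (en n • s)
      rw [Real.norm_eq_abs] at hCs
      exact mul_le_mul_of_nonneg_left hCs (hrrnn s)
    · filter_upwards with s
      apply Filter.Tendsto.const_mul
      have h1 : Filter.Tendsto (fun n => en n • s) Filter.atTop (nhds ((0:ℝ) • s)) :=
        en_tendsto.smul_const s
      rw [zero_smul] at h1
      exact (hhc.tendsto 0).comp h1
  have hval : ∫ s : E3, rr 1 s * h 0 = h 0 := by
    rw [int_mul_const, integral_rr1, one_mul]
  rw [hval] at key
  exact key

end S13

namespace S13

lemma topc1 : ((⊤:ℕ∞) : WithTop ℕ∞) + 1 ≤ ((⊤:ℕ∞) : WithTop ℕ∞) :=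
  le_of_eq ENat.coe_top_add_one

lemma onec : (1 : WithTop ℕ∞) ≤ ((⊤:ℕ∞) : WithTop ℕ∞) := by
  rw [show ((1:WithTop ℕ∞)) = ((1:ℕ∞) : WithTop ℕ∞) by rfl]
  exact_mod_cast le_top

lemma twoc : (2 : WithTop ℕ∞) ≤ ((⊤:ℕ∞) : WithTop ℕ∞) := by
  rw [show ((2:WithTop ℕ∞)) = ((2:ℕ∞) : WithTop ℕ∞) by rfl]
  exact_mod_cast le_top

lemma cont_mul_cpt_integrable {a ψ : E3 → ℝ} (ha : Continuous a) (hψc : Continuous ψ)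
    (hψs : HasCompactSupport ψ) : Integrable (fun t => a t * ψ t) volume :=
  (ha.mul hψc).integrable_of_hasCompactSupport (hψs.mul_left)

lemma contDiff_pd {g : E3 → ℝ} (hg : ContDiff ℝ (⊤ : ℕ∞) g) (m : Fin 3) :
    ContDiff ℝ (⊤ : ℕ∞) (fun z => fderiv ℝ g z (e3 m)) := by
  have h1 : ContDiff ℝ (⊤ : ℕ∞) (fderiv ℝ g) := hg.fderiv_right topc1
  exact (ContinuousLinearMap.apply ℝ ℝ (e3 m)).contDiff.comp h1

lemma hcs_pd {g : E3 → ℝ} (hs : HasCompactSupport g) (m : Fin 3) :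
    HasCompactSupport (fun z => fderiv ℝ g z (e3 m)) := by
  have h1 : HasCompactSupport (fderiv ℝ g) := hs.fderiv (𝕜 := ℝ)
  exact h1.comp_left (g := fun L : E3 →L[ℝ] ℝ => L (e3 m)) (by simp)

/-- integration by parts against a compactly supported smooth function -/
lemma ibp (m : Fin 3) {u ψ : E3 → ℝ} (hud : Differentiable ℝ u)
    (huc : Continuous fun t => fderiv ℝ u t (e3 m))
    (hψ : ContDiff ℝ (⊤ : ℕ∞) ψ) (hψs : HasCompactSupport ψ) :
    ∫ t : E3, u t * fderiv ℝ ψ t (e3 m) = -∫ t : E3, fderiv ℝ u t (e3 m) * ψ t := by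
  apply integral_mul_fderiv_eq_neg_fderiv_mul_of_integrable
  · exact cont_mul_cpt_integrable huc hψ.continuous hψs
  · have h1 := cont_mul_cpt_integrable hud.continuous
      (contDiff_pd hψ m).continuous (hcs_pd hψs m)
    exact h1
  · exact cont_mul_cpt_integrable hud.continuous hψ.continuous hψs
  · exact fun x _ => hud x
  · exact fun x _ => hψ.differentiable (by simp) x

/-- Schwarz symmetry of second derivatives -/
lemma schwarz {ψ : E3 → ℝ} (hψ : ContDiff ℝ (⊤ : ℕ∞) ψ) (i j : Fin 3) (t : E3) :
    fderiv ℝ (fun z => fderiv ℝ ψ z (e3 i)) t (e3 j)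
      = fderiv ℝ (fun z => fderiv ℝ ψ z (e3 j)) t (e3 i) := by
  have hsym : IsSymmSndFDerivAt ℝ ψ t := by
    exact ContDiffAt.isSymmSndFDerivAt (n := ((⊤ : ℕ∞) : WithTop ℕ∞)) hψ.contDiffAt (by simp [minSmoothness_of_isRCLikeNormedField]; exact twoc)
  have hF : Differentiable ℝ (fderiv ℝ ψ) :=
    (hψ.fderiv_right topc1).differentiable (by simp)
  have key : ∀ v w : E3, fderiv ℝ (fun z => fderiv ℝ ψ z v) t w
      = fderiv ℝ (fderiv ℝ ψ) t w v := by
    intro v w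
    have h1 : fderiv ℝ (fun z => fderiv ℝ ψ z v) t
        = (ContinuousLinearMap.apply ℝ ℝ v).comp (fderiv ℝ (fderiv ℝ ψ) t) := by
      have := (ContinuousLinearMap.apply ℝ ℝ v).hasFDerivAt.comp t (hF t).hasFDerivAt
      exact this.fderiv
    rw [h1]
    rfl
  rw [key (e3 i) (e3 j), key (e3 j) (e3 i)]
  exact hsym (e3 j) (e3 i)

/-- per-ε divergence identity -/
lemma divB_eps {ψ : E3 → ℝ} (hψ : ContDiff ℝ (⊤ : ℕ∞) ψ) (hψs : HasCompactSupport ψ)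
    (n : ℕ) :
    ∑ i : Fin 3, ∫ t : E3, Kk i (en n) t * fderiv ℝ ψ t (e3 i)
      = ∫ t : E3, rr (en n) t * ψ t := by
  have step : ∀ i : Fin 3, ∫ t : E3, Kk i (en n) t * fderiv ℝ ψ t (e3 i)
      = -∫ t : E3, fderiv ℝ (Kk i (en n)) t (e3 i) * ψ t := fun i =>
    ibp i (differentiable_Kk (en_ne n) i) (continuous_pd_Kk (en_ne n) i i) hψ hψs
  rw [Finset.sum_congr rfl fun i _ => step i]
  rw [Finset.sum_neg_distrib, ← integral_finset_sum]
  · rw [← integral_neg]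
    congr 1
    ext t
    rw [← Finset.sum_mul, div_Kk (en_ne n) t]
    ring
  · intro i _
    exact cont_mul_cpt_integrable (continuous_pd_Kk (en_ne n) i i) hψ.continuous hψs

/-- per-ε symmetry identity -/
lemma symmA_eps {ψ : E3 → ℝ} (hψ : ContDiff ℝ (⊤ : ℕ∞) ψ) (hψs : HasCompactSupport ψ)
    (i j : Fin 3) (n : ℕ) :
    ∫ t : E3, Kk j (en n) t * fderiv ℝ ψ t (e3 i)
      = ∫ t : E3, Kk i (en n) t * fderiv ℝ ψ t (e3 j) := by
  have hPd : Differentiable ℝ (Ph (en n)) :=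
    fun t => (hasFDerivAt_Ph (en_ne n) t).differentiableAt
  have hPc : ∀ m : Fin 3, Continuous fun t => fderiv ℝ (Ph (en n)) t (e3 m) := by
    intro m
    have : (fun t => fderiv ℝ (Ph (en n)) t (e3 m)) = Kk m (en n) :=
      funext fun t => pd_Ph (en_ne n) t m
    rw [this]
    exact (differentiable_Kk (en_ne n) m).continuous
  have e1 : ∀ (a b : Fin 3), ∫ t : E3, Kk a (en n) t * fderiv ℝ ψ t (e3 b)
      = -∫ t : E3, Ph (en n) t * fderiv ℝ (fun z => fderiv ℝ ψ z (e3 b)) t (e3 a) := by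
    intro a b
    have h := ibp a hPd (hPc a) (contDiff_pd hψ b) (hcs_pd hψs b)
    have h2 : ∫ t : E3, fderiv ℝ (Ph (en n)) t (e3 a) * fderiv ℝ ψ t (e3 b)
        = -∫ t : E3, Ph (en n) t * fderiv ℝ (fun z => fderiv ℝ ψ z (e3 b)) t (e3 a) := by
      rw [h, neg_neg]
    rw [← h2]
    congr 1
    ext t
    rw [pd_Ph (en_ne n) t a]
  rw [e1 j i, e1 i j]
  congr 1
  congr 1
  ext t
  rw [schwarz hψ i j t]

/-- key identity B: divergence of the convolution reproduces the function -/
lemma coreB {ψ : E3 → ℝ} (hψ : ContDiff ℝ (⊤ : ℕ∞) ψ) (hψs : HasCompactSupport ψ) :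
    ∑ i : Fin 3, ∫ t : E3, Kk i 0 t * fderiv ℝ ψ t (e3 i) = ψ 0 := by
  have hL : Filter.Tendsto
      (fun n => ∑ i : Fin 3, ∫ t : E3, Kk i (en n) t * fderiv ℝ ψ t (e3 i))
      Filter.atTop (nhds (∑ i : Fin 3, ∫ t : E3, Kk i 0 t * fderiv ℝ ψ t (e3 i))) := by
    apply tendsto_finset_sum
    intro i _
    exact tendsto_Kk_integral i (contDiff_pd hψ i).continuous (hcs_pd hψs i)
  have hR : Filter.Tendsto
      (fun n => ∑ i : Fin 3, ∫ t : E3, Kk i (en n) t * fderiv ℝ ψ t (e3 i))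
      Filter.atTop (nhds (ψ 0)) := by
    have := tendsto_rr_integral hψ.continuous hψs
    apply this.congr
    intro n
    exact (divB_eps hψ hψs n).symm
  exact tendsto_nhds_unique hL hR

/-- key identity A: symmetry of mixed convolutions -/
lemma coreA {ψ : E3 → ℝ} (hψ : ContDiff ℝ (⊤ : ℕ∞) ψ) (hψs : HasCompactSupport ψ)
    (i j : Fin 3) :
    ∫ t : E3, Kk j 0 t * fderiv ℝ ψ t (e3 i)
      = ∫ t : E3, Kk i 0 t * fderiv ℝ ψ t (e3 j) := by
  have hL := tendsto_Kk_integral j (contDiff_pd hψ i).continuous (hcs_pd hψs i)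
  have hR := tendsto_Kk_integral i (contDiff_pd hψ j).continuous (hcs_pd hψs j)
  have hEq : (fun n => ∫ t : E3, Kk j (en n) t * fderiv ℝ ψ t (e3 i))
      = fun n => ∫ t : E3, Kk i (en n) t * fderiv ℝ ψ t (e3 j) :=
    funext fun n => symmA_eps hψ hψs i j n
  rw [hEq] at hL
  exact tendsto_nhds_unique hL hR

end S13

namespace S13

lemma qF_eq (i : Fin 3) (y x : E3) : qF i y x = Kk i 0 (y - x) := by
  rcases eq_or_ne (y - x) 0 with h0 | h0
  · have hxy : y i - x i = 0 := by
      have : (y - x) i = 0 := by rw [h0]; rfl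
      simpa [PiLp.sub_apply] using this
    rw [qF, Kk]
    have h2 : (y - x) i = 0 := by rw [h0]; rfl
    rw [hxy, h2]
    simp
  · have hn : (0:ℝ) < ‖y - x‖ := norm_pos_iff.mpr h0
    rw [qF, Kk]
    have h1 : (y - x) i = y i - x i := by simp [PiLp.sub_apply]
    have h2 : Pp (-(3/2)) 0 (y - x) = (‖y - x‖ ^ (3:ℕ))⁻¹ := by
      rw [Pp, nsq_eq_norm_sq]
      have : ((0:ℝ)) ^ 2 = 0 := by norm_num
      rw [this, add_zero, ← Real.rpow_natCast ‖y - x‖ 2, ← Real.rpow_mul (norm_nonneg _)]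
      rw [show ((2:ℕ):ℝ) * (-(3/2)) = -(3:ℝ) by norm_num]
      rw [Real.rpow_neg (norm_nonneg _), ← Real.rpow_natCast ‖y - x‖ 3]
      norm_num
    rw [h1, h2, div_eq_mul_inv, mul_inv]
    ring

lemma conv_repr (i : Fin 3) (g : E3 → ℝ) (y : E3) :
    ∫ x : E3, qF i y x * g x = ∫ t : E3, Kk i 0 t * g (y - t) := by
  have h1 : ∫ x : E3, qF i y x * g x
      = ∫ x : E3, (fun z => Kk i 0 z * g (y - z)) (y - x) := by
    congr 1
    ext x
    show qF i y x * g x = Kk i 0 (y - x) * g (y - (y - x))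
    rw [qF_eq, sub_sub_cancel]
  rw [h1]
  exact integral_sub_left_eq_self (fun z => Kk i 0 z * g (y - z)) volume y

/-- the convolution operator with the Stokes pressure kernel -/
def Cv (g : E3 → ℝ) (i : Fin 3) : E3 → ℝ :=
  convolution (Kk i 0) g (ContinuousLinearMap.mul ℝ ℝ) volume

lemma Cv_eq (g : E3 → ℝ) (i : Fin 3) (y : E3) :
    Cv g i y = ∫ t : E3, Kk i 0 t * g (y - t) := by
  rw [Cv, convolution_def]
  rfl

lemma qF_int_eq_Cv (i : Fin 3) (g : E3 → ℝ) :
    (fun y : E3 => ∫ x : E3, qF i y x * g x) = Cv g i :=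
  funext fun y => (conv_repr i g y).trans (Cv_eq g i y).symm

lemma contDiff_Cv {g : E3 → ℝ} (hg : ContDiff ℝ (⊤ : ℕ∞) g) (hgs : HasCompactSupport g)
    (i : Fin 3) : ContDiff ℝ (⊤ : ℕ∞) (Cv g i) :=
  hgs.contDiff_convolution_right _ (locallyIntegrable_K i) hg

lemma pd_Cv {g : E3 → ℝ} (hg : ContDiff ℝ (⊤ : ℕ∞) g) (hgs : HasCompactSupport g)
    (i m : Fin 3) (y : E3) :
    fderiv ℝ (Cv g i) y (e3 m) = Cv (fun z => fderiv ℝ g z (e3 m)) i y := by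
  have hL := hgs.hasFDerivAt_convolution_right (ContinuousLinearMap.mul ℝ ℝ)
    (locallyIntegrable_K i) (hg.of_le onec) y
  have hC : Cv g i = convolution (Kk i 0) g (ContinuousLinearMap.mul ℝ ℝ) volume := rfl
  rw [hC, HasFDerivAt.fderiv hL]
  have hex : Integrable (fun t => ((ContinuousLinearMap.mul ℝ ℝ).precompR E3 (Kk i 0 t))
      (fderiv ℝ g (y - t))) volume := by
    have hconv := HasCompactSupport.convolutionExists_right
      ((ContinuousLinearMap.mul ℝ ℝ).precompR E3) (hgs.fderiv (𝕜 := ℝ))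
      (locallyIntegrable_K i) (hg.fderiv_right topc1).continuous y
    exact hconv
  rw [convolution_def, ContinuousLinearMap.integral_apply hex (e3 m), Cv_eq]
  congr 1

lemma smooth_shift {g : E3 → ℝ} (hg : ContDiff ℝ (⊤ : ℕ∞) g) (y : E3) :
    ContDiff ℝ (⊤ : ℕ∞) (fun t : E3 => g (y - t)) :=
  hg.comp (contDiff_const.sub contDiff_id)

lemma cpt_shift {g : E3 → ℝ} (hgs : HasCompactSupport g) (y : E3) :
    HasCompactSupport (fun t : E3 => g (y - t)) := by
  have hφ : HasCompactSupport (g ∘ ((Homeomorph.neg E3).trans (Homeomorph.addLeft y))) :=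
    hgs.comp_homeomorph _
  have : (fun t : E3 => g (y - t))
      = g ∘ ((Homeomorph.neg E3).trans (Homeomorph.addLeft y)) := by
    ext t
    simp [Function.comp, sub_eq_add_neg]
  rw [this]
  exact hφ

lemma pd_flip {g : E3 → ℝ} (hg : ContDiff ℝ (⊤ : ℕ∞) g) (y t : E3) (i : Fin 3) :
    fderiv ℝ (fun s : E3 => g (y - s)) t (e3 i) = -(fderiv ℝ g (y - t) (e3 i)) := by
  have hA : HasFDerivAt (fun s : E3 => y - s) (-(ContinuousLinearMap.id ℝ E3)) t :=
    (hasFDerivAt_id t).const_sub y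
  have hgd : HasFDerivAt g (fderiv ℝ g (y - t)) (y - t) :=
    ((hg.differentiable (by simp)) (y - t)).hasFDerivAt
  have h2 : fderiv ℝ (fun s : E3 => g (y - s)) t
      = (fderiv ℝ g (y - t)).comp (-ContinuousLinearMap.id ℝ E3) := (hgd.comp t hA).fderiv
  rw [h2]
  simp

/-- key identity A in convolution form -/
lemma CvA {g : E3 → ℝ} (hg : ContDiff ℝ (⊤ : ℕ∞) g) (hgs : HasCompactSupport g)
    (i j : Fin 3) (y : E3) :
    Cv (fun z => fderiv ℝ g z (e3 i)) j y = Cv (fun z => fderiv ℝ g z (e3 j)) i y := by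
  have hsm := smooth_shift hg y
  have hcp := cpt_shift hgs y
  have h1 : ∀ (a b : Fin 3), Cv (fun z => fderiv ℝ g z (e3 b)) a y
      = -∫ t : E3, Kk a 0 t * fderiv ℝ (fun s : E3 => g (y - s)) t (e3 b) := by
    intro a b
    rw [Cv_eq, ← integral_neg]
    congr 1
    ext t
    rw [pd_flip hg y t b]
    ring
  rw [h1 j i, h1 i j, coreA hsm hcp i j]

/-- key identity B in convolution form -/
lemma CvB {g : E3 → ℝ} (hg : ContDiff ℝ (⊤ : ℕ∞) g) (hgs : HasCompactSupport g) (y : E3) :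
    ∑ i : Fin 3, Cv (fun z => fderiv ℝ g z (e3 i)) i y = -g y := by
  have hsm := smooth_shift hg y
  have hcp := cpt_shift hgs y
  have h1 : ∀ (a : Fin 3), Cv (fun z => fderiv ℝ g z (e3 a)) a y
      = -∫ t : E3, Kk a 0 t * fderiv ℝ (fun s : E3 => g (y - s)) t (e3 a) := by
    intro a
    rw [Cv_eq, ← integral_neg]
    congr 1
    ext t
    rw [pd_flip hg y t a]
    ring
  rw [Finset.sum_congr rfl fun a _ => h1 a, Finset.sum_neg_distrib,
    coreB hsm hcp]
  simp

end S13

/-- For every f ∈ C_c^∞(ℝ³), the pair of pressure p = (4/3)f and velocity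
v = -Q̊f, with (Q̊f)_j(y) = ∫ q̊^j(y,x) f(x) dx, satisfies the homogeneous constant
viscosity compressible Stokes system on ℝ³:
Å_j((4/3)f, -Q̊f)(y) = Δ(-Q̊f)_j(y) + (1/3)∂_j div(-Q̊f)(y) - (4/3)∂_j f(y) = 0. -/
theorem stmt13 (f : E3 → ℝ) (hf : ContDiff ℝ (⊤ : ℕ∞) f) (hc : HasCompactSupport f) :
    (∀ i : Fin 3, ContDiff ℝ (⊤ : ℕ∞) (fun y : E3 => ∫ x : E3, qF i y x * f x)) ∧
    ∀ (j : Fin 3) (y : E3),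
      lap (fun z : E3 => -(∫ x : E3, qF j z x * f x)) y
        + (1 / 3) * pd j (fun z : E3 =>
            ∑ i : Fin 3, pd i (fun w : E3 => -(∫ x : E3, qF i w x * f x)) z) y
        - (4 / 3) * pd j f y = 0 := by
  have hDsm : ∀ m : Fin 3, ContDiff ℝ (⊤:ℕ∞) (fun z : E3 => fderiv ℝ f z (e3 m)) :=
    fun m => S13.contDiff_pd hf m
  have hDcs : ∀ m : Fin 3, HasCompactSupport (fun z : E3 => fderiv ℝ f z (e3 m)) :=
    fun m => S13.hcs_pd hc m
  have hinner : ∀ i : Fin 3, (fun w : E3 => -(∫ x : E3, qF i w x * f x))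
      = fun w => -(S13.Cv f i w) := by
    intro i
    funext w
    exact congrArg Neg.neg (congrFun (S13.qF_int_eq_Cv i f) w)
  have hpdnegCv : ∀ (g : E3 → ℝ), ContDiff ℝ (⊤:ℕ∞) g → HasCompactSupport g →
      ∀ (a m : Fin 3) (z : E3), pd m (fun w => -(S13.Cv g a w)) z
        = -(S13.Cv (fun w => fderiv ℝ g w (e3 m)) a z) := by
    intro g hg hgs a m z
    show fderiv ℝ (fun w => -(S13.Cv g a w)) z (e3 m) = _
    rw [fderiv_fun_neg, ContinuousLinearMap.neg_apply, S13.pd_Cv hg hgs a m z]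
  constructor
  · intro i
    rw [S13.qF_int_eq_Cv i f]
    exact S13.contDiff_Cv hf hc i
  · intro j y
    have hlap : lap (fun z : E3 => -(∫ x : E3, qF j z x * f x)) y = pd j f y := by
      have hstep : ∀ i : Fin 3,
          pd i (fun z : E3 => pd i (fun w : E3 => -(∫ x : E3, qF j w x * f x)) z) y
            = -(S13.Cv (fun z => fderiv ℝ (fun w => fderiv ℝ f w (e3 j)) z (e3 i)) i y) := by
        intro i
        have h1 : (fun z : E3 => pd i (fun w : E3 => -(∫ x : E3, qF j w x * f x)) z)
            = fun z => -(S13.Cv (fun w => fderiv ℝ f w (e3 i)) j z) := by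
          funext z
          rw [hinner j]
          exact hpdnegCv f hf hc j i z
        rw [h1, hpdnegCv (fun w => fderiv ℝ f w (e3 i)) (hDsm i) (hDcs i) j i y,
          S13.CvA (hDsm i) (hDcs i) i j y]
        have hsch : (fun z => fderiv ℝ (fun w => fderiv ℝ f w (e3 i)) z (e3 j))
            = fun z => fderiv ℝ (fun w => fderiv ℝ f w (e3 j)) z (e3 i) :=
          funext fun t => S13.schwarz hf i j t
        rw [hsch]
      calc lap (fun z : E3 => -(∫ x : E3, qF j z x * f x)) y
          = ∑ i : Fin 3,
              pd i (fun z : E3 => pd i (fun w : E3 => -(∫ x : E3, qF j w x * f x)) z) y := rfl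
        _ = ∑ i : Fin 3,
              -(S13.Cv (fun z => fderiv ℝ (fun w => fderiv ℝ f w (e3 j)) z (e3 i)) i y) :=
            Finset.sum_congr rfl fun i _ => hstep i
        _ = -∑ i : Fin 3,
              S13.Cv (fun z => fderiv ℝ (fun w => fderiv ℝ f w (e3 j)) z (e3 i)) i y :=
            Finset.sum_neg_distrib _
        _ = -(-(fun w => fderiv ℝ f w (e3 j)) y) := by rw [S13.CvB (hDsm j) (hDcs j) y]
        _ = pd j f y := by rw [neg_neg]; rfl
    have hmid : (fun z : E3 => ∑ i : Fin 3,
        pd i (fun w : E3 => -(∫ x : E3, qF i w x * f x)) z) = f := by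
      funext z
      have hstep : ∀ i : Fin 3, pd i (fun w : E3 => -(∫ x : E3, qF i w x * f x)) z
          = -(S13.Cv (fun w => fderiv ℝ f w (e3 i)) i z) := by
        intro i
        rw [hinner i]
        exact hpdnegCv f hf hc i i z
      rw [Finset.sum_congr rfl fun i _ => hstep i, Finset.sum_neg_distrib,
        S13.CvB hf hc z, neg_neg]
    rw [hlap, hmid]
    ring
end
end
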